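/- arXiv:2001.01239 — 5 statements merged into one kernel-verified Lean document; each statement's English description precedes it below -/
import Mathlib

section
/- Let 0 < ε < R and let u ∈ C²((ε,R)) ∩ C¹([ε,R]) satisfy u''(s) + ((N−1)/s)u'(s) + f(u(s)) = 0 for all s ∈ (ε,R) and u(s) > 0 for s ∈ (ε,R). Then 0 = (N/2 − 1 − N/(p+1)) ∫_ε^R s^{N−1} u'(s)² ds + (N/2 − N/(p+1)) ∫_ε^R s^{N−1} u(s)² ds + (N/(p+1)) (R^{N−1} u(R) u'(R) − ε^{N−1} u(ε) u'(ε)) + (1/2)(R^N u'(R)² − ε^N u'(ε)²) − (1/2)(R^N u(R)² − ε^N u(ε)²) + (1/(p+1))(R^N u(R)^{p+1} − ε^N u(ε)^{p+1}). -/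
open Real Set Filter Topology MeasureTheory

noncomputable section

/-- The nonlinearity `f(u) = -u + u^p`. -/
def fNL (p u : ℝ) : ℝ := -u + u ^ p

/-- The Sobolev critical exponent `p_S = (N+2)/(N-2)`. -/
def pSob (N : ℕ) : ℝ := ((N : ℝ) + 2) / ((N : ℝ) - 2)

/-- `θ = 2/(p-1)`. -/
def thetaP (p : ℝ) : ℝ := 2 / (p - 1)

/-- `A = (θ(N-2-θ))^{1/(p-1)}`. -/
def Aconst (N : ℕ) (p : ℝ) : ℝ :=
  (thetaP p * ((N : ℝ) - 2 - thetaP p)) ^ (1 / (p - 1))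

/-- `m = (θ(N-2-θ))^{-1/2}`. -/
def mConst (N : ℕ) (p : ℝ) : ℝ :=
  (thetaP p * ((N : ℝ) - 2 - thetaP p)) ^ (-(1 / 2) : ℝ)

/-- `α = m(N-2-2θ)`. -/
def alphaConst (N : ℕ) (p : ℝ) : ℝ :=
  mConst N p * ((N : ℝ) - 2 - 2 * thetaP p)

/-- The condition `p < p_JL`, where `p_JL = 1 + 4/(N-4-2√(N-1))` for `N ≥ 11` and
`p_JL = ∞` for `N ≤ 10`. -/
def pJLcond (N : ℕ) (p : ℝ) : Prop :=
  11 ≤ N → p < 1 + 4 / ((N : ℝ) - 4 - 2 * Real.sqrt ((N : ℝ) - 1))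

/-- `y` is a C² solution of `y'' + α y' - y + y^p - m² e^{2mt} y = 0` on `(-∞, T]`
with `y → 1` as `t → -∞`; `y'`, `y''` are its first and second derivatives. -/
def IsSingODEOn (N : ℕ) (p T : ℝ) (y y' y'' : ℝ → ℝ) : Prop :=
  (∀ t ∈ Iic T, HasDerivWithinAt y (y' t) (Iic T) t) ∧
  (∀ t ∈ Iic T, HasDerivWithinAt y' (y'' t) (Iic T) t) ∧
  ContinuousOn y'' (Iic T) ∧
  (∀ t ∈ Iic T, y'' t + alphaConst N p * y' t - y t + y t ^ p
      - (mConst N p) ^ 2 * Real.exp (2 * mConst N p * t) * y t = 0) ∧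
  Tendsto y atBot (𝓝 1)

/-- `y` is a C² solution of `y'' + α y' - y + y^p - m² e^{2mt} y = 0` on all of `ℝ`
with `y → 1` as `t → -∞`. -/
def IsEntireSingODE (N : ℕ) (p : ℝ) (y y' y'' : ℝ → ℝ) : Prop :=
  (∀ t : ℝ, HasDerivAt y (y' t) t) ∧
  (∀ t : ℝ, HasDerivAt y' (y'' t) t) ∧
  Continuous y'' ∧
  (∀ t : ℝ, y'' t + alphaConst N p * y' t - y t + y t ^ p
      - (mConst N p) ^ 2 * Real.exp (2 * mConst N p * t) * y t = 0) ∧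
  Tendsto y atBot (𝓝 1)

/-- The singular solution `u*(s) = A s^{-θ} y*(m⁻¹ log s)` built from `y*`. -/
def ustar (N : ℕ) (p : ℝ) (y : ℝ → ℝ) (s : ℝ) : ℝ :=
  Aconst N p * s ^ (-(thetaP p)) * y (Real.log s / mConst N p)

/-- `u` is a C² solution on `[0,∞)` of the IVP `u'' + ((N-1)/s)u' + f(u) = 0`,
`u(0) = γ`, `u'(0) = 0`, with nonlinearity `f(u) = -u + u^p`. -/
def IsIVPSol (N : ℕ) (p γ : ℝ) (u u' u'' : ℝ → ℝ) : Prop :=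
  (∀ s ∈ Ici (0:ℝ), HasDerivWithinAt u (u' s) (Ici 0) s) ∧
  (∀ s ∈ Ici (0:ℝ), HasDerivWithinAt u' (u'' s) (Ici 0) s) ∧
  ContinuousOn u'' (Ici 0) ∧
  u 0 = γ ∧ u' 0 = 0 ∧
  (∀ s > (0:ℝ), u'' s + ((N : ℝ) - 1) / s * u' s + fNL p (u s) = 0)

/-- `u` is a C² solution on `[0,∞)` of the IVP `u'' + ((N-1)/ρ)u' + u^p = 0`,
`u(0) = γ`, `u'(0) = 0`. -/
def IsBarSol (N : ℕ) (p γ : ℝ) (u u' u'' : ℝ → ℝ) : Prop :=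
  (∀ ρ ∈ Ici (0:ℝ), HasDerivWithinAt u (u' ρ) (Ici 0) ρ) ∧
  (∀ ρ ∈ Ici (0:ℝ), HasDerivWithinAt u' (u'' ρ) (Ici 0) ρ) ∧
  ContinuousOn u'' (Ici 0) ∧
  u 0 = γ ∧ u' 0 = 0 ∧
  (∀ ρ > (0:ℝ), u'' ρ + ((N : ℝ) - 1) / ρ * u' ρ + u ρ ^ p = 0)

/-- `s` is the `(k+1)`-th positive critical point of a function whose derivative is `u'`:
`s` is a positive critical point having exactly `k` positive critical points below it. -/
def IsNthCritPt (u' : ℝ → ℝ) (k : ℕ) (s : ℝ) : Prop :=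
  0 < s ∧ u' s = 0 ∧ {x : ℝ | 0 < x ∧ x < s ∧ u' x = 0}.encard = (k : ℕ∞)

/-- `U` is a positive C² radial solution of the Neumann problem
`U'' + ((N-1)/r)U' + λ f(U) = 0` on `(0,1)`, `U'(0) = U'(1) = 0`, `U > 0` on `[0,1]`. -/
def NeumannSol (N : ℕ) (p lam : ℝ) (U U' U'' : ℝ → ℝ) : Prop :=
  (∀ r ∈ Icc (0:ℝ) 1, HasDerivWithinAt U (U' r) (Icc 0 1) r) ∧
  (∀ r ∈ Icc (0:ℝ) 1, HasDerivWithinAt U' (U'' r) (Icc 0 1) r) ∧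
  ContinuousOn U'' (Icc 0 1) ∧
  (∀ r ∈ Ioo (0:ℝ) 1, U'' r + ((N : ℝ) - 1) / r * U' r + lam * fNL p (U r) = 0) ∧
  U' 0 = 0 ∧ U' 1 = 0 ∧ (∀ r ∈ Icc (0:ℝ) 1, 0 < U r)

/-- `(lam, U)` is a singular solution of the Neumann problem whose graph meets `1`
exactly `n` times: `U` is C² on `(0,1)`, continuous on `(0,1]`, `U'(1) = 0`, it solves
`U'' + ((N-1)/r)U' + λ f(U) = 0` on `(0,1)`, satisfies the asymptotics
`U(r) = A(√λ r)^{-θ}(1+o(1))` as `r ↓ 0` (i.e. `r^θ U(r) → A λ^{-θ/2}`),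
`U - 1` has exactly `n` zeros in `(0,1]`, and `U > 0` on `(0,1]`. -/
def SingBVPSol (N : ℕ) (p lam : ℝ) (n : ℕ) (U U' U'' : ℝ → ℝ) : Prop :=
  (∀ r ∈ Ioc (0:ℝ) 1, HasDerivWithinAt U (U' r) (Ioc 0 1) r) ∧
  (∀ r ∈ Ioo (0:ℝ) 1, HasDerivAt U' (U'' r) r) ∧
  ContinuousOn U (Ioc 0 1) ∧
  ContinuousOn U'' (Ioo 0 1) ∧
  (∀ r ∈ Ioo (0:ℝ) 1, U'' r + ((N : ℝ) - 1) / r * U' r + lam * fNL p (U r) = 0) ∧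
  U' 1 = 0 ∧
  Tendsto (fun r => r ^ thetaP p * U r) (𝓝[>] (0:ℝ))
    (𝓝 (Aconst N p * lam ^ (-(thetaP p) / 2))) ∧
  {r ∈ Ioc (0:ℝ) 1 | U r = 1}.encard = (n : ℕ∞) ∧
  (∀ r ∈ Ioc (0:ℝ) 1, 0 < U r)

/-- Pohozaev identity in integral form. -/
theorem pohozaev_identity (N : ℕ) (hN : 3 ≤ N) (p : ℝ) (hp : 1 < p)
    (ε R : ℝ) (hε : 0 < ε) (hεR : ε < R)
    (u u' u'' : ℝ → ℝ)
    (hu : ∀ s ∈ Icc ε R, HasDerivWithinAt u (u' s) (Icc ε R) s)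
    (hu'cont : ContinuousOn u' (Icc ε R))
    (hu' : ∀ s ∈ Ioo ε R, HasDerivAt u' (u'' s) s)
    (hu''cont : ContinuousOn u'' (Ioo ε R))
    (hode : ∀ s ∈ Ioo ε R, u'' s + ((N : ℝ) - 1) / s * u' s + fNL p (u s) = 0)
    (hpos : ∀ s ∈ Ioo ε R, 0 < u s) :
    0 = ((N : ℝ) / 2 - 1 - (N : ℝ) / (p + 1)) * (∫ s in ε..R, s ^ (N - 1) * (u' s) ^ 2)
      + ((N : ℝ) / 2 - (N : ℝ) / (p + 1)) * (∫ s in ε..R, s ^ (N - 1) * (u s) ^ 2)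
      + (N : ℝ) / (p + 1) * (R ^ (N - 1) * u R * u' R - ε ^ (N - 1) * u ε * u' ε)
      + (1 / 2) * (R ^ N * (u' R) ^ 2 - ε ^ N * (u' ε) ^ 2)
      - (1 / 2) * (R ^ N * (u R) ^ 2 - ε ^ N * (u ε) ^ 2)
      + (1 / (p + 1)) * (R ^ N * u R ^ (p + 1) - ε ^ N * u ε ^ (p + 1)) := by
  obtain ⟨n, rfl⟩ : ∃ n, N = n + 2 := ⟨N - 2, by omega⟩
  set N : ℕ := n + 2 with hNdef
  have hp1 : (0:ℝ) < p + 1 := by linarith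
  have hp1' : (p:ℝ) + 1 ≠ 0 := ne_of_gt hp1
  have hN1 : N - 1 = n + 1 := by omega
  have hN2 : N - 2 = n := by omega
  -- the boundary function
  set G : ℝ → ℝ := fun s => (N:ℝ) / (p + 1) * (s ^ (N - 1) * (u s * u' s))
      + (1 / 2) * (s ^ N * (u' s) ^ 2) - (1 / 2) * (s ^ N * (u s) ^ 2)
      + (1 / (p + 1)) * (s ^ N * u s ^ (p + 1)) with hGdef
  -- the integrand
  set h : ℝ → ℝ := fun s =>
      (1 + (N:ℝ) / (p + 1) - (N:ℝ) / 2) * (s ^ (N - 1) * (u' s) ^ 2)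
      + ((N:ℝ) / (p + 1) - (N:ℝ) / 2) * (s ^ (N - 1) * (u s) ^ 2) with hhdef
  have hucont : ContinuousOn u (Icc ε R) := fun s hs => (hu s hs).continuousWithinAt
  -- derivative of G on the open interval
  have hGderiv : ∀ s ∈ Ioo ε R, HasDerivAt G (h s) s := by
    intro s hs
    have hs0 : 0 < s := lt_trans hε hs.1
    have hs0' : s ≠ 0 := ne_of_gt hs0
    have hu0 : 0 < u s := hpos s hs
    have hdu : HasDerivAt u (u' s) s :=
      (hu s (Ioo_subset_Icc_self hs)).hasDerivAt (Icc_mem_nhds hs.1 hs.2)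
    have hdu' : HasDerivAt u' (u'' s) s := hu' s hs
    have hpow1 : HasDerivAt (fun x : ℝ => x ^ (N - 1)) ((n + 1 : ℝ) * s ^ n) s := by
      rw [hN1]
      have h := hasDerivAt_pow (n + 1) s
      convert h using 1
      push_cast
      case e'_4 => rfl
      case e'_9 => simp
    have hpow2 := hasDerivAt_pow N s
    have hrpow : HasDerivAt (fun x => u x ^ (p + 1))
        (u' s * (p + 1) * u s ^ (p + 1 - 1)) s :=
      hdu.rpow_const (Or.inl (ne_of_gt hu0))
    have hd1 := ((hpow1.mul (hdu.mul hdu')).const_mul ((N:ℝ) / (p + 1)))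
    have hd2 := ((hpow2.mul (hdu'.pow 2)).const_mul ((1:ℝ) / 2))
    have hd3 := ((hpow2.mul (hdu.pow 2)).const_mul ((1:ℝ) / 2))
    have hd4 := ((hpow2.mul hrpow).const_mul ((1:ℝ) / (p + 1)))
    have hD := ((hd1.add hd2).sub hd3).add hd4
    convert hD using 1
    case e'_4 => rfl
    case e'_5 => rfl
    case e'_8 => rfl
    -- algebraic identity using the ODE
    have hode := hode s hs
    simp only [fNL] at hode
    have hc : u'' s = u s - u s ^ p - ((N:ℝ) - 1) / s * u' s := by linarith
    have hup1 : u s ^ (p + 1) = u s ^ p * u s := by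
      rw [Real.rpow_add hu0, Real.rpow_one]
    have hup1' : u s ^ (p + 1 - 1) = u s ^ p := by norm_num
    simp only [hhdef, hc, hup1, hup1', hN1, hN2, hNdef, Pi.mul_apply, Pi.pow_apply]
    push_cast
    field_simp
    ring
  -- continuity of G on [ε, R]
  have hGcont : ContinuousOn G (Icc ε R) := by
    have h1 : ContinuousOn (fun s : ℝ => s ^ (N - 1)) (Icc ε R) :=
      (continuous_pow _).continuousOn
    have h2 : ContinuousOn (fun s : ℝ => s ^ N) (Icc ε R) :=
      (continuous_pow _).continuousOn
    have h3 : ContinuousOn (fun s => u s ^ (p + 1)) (Icc ε R) :=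
      hucont.rpow_const (fun x _ => Or.inr (by linarith))
    rw [hGdef]
    exact (((continuousOn_const.mul (h1.mul (hucont.mul hu'cont))).add
        (continuousOn_const.mul (h2.mul (hu'cont.pow 2)))).sub
        (continuousOn_const.mul (h2.mul (hucont.pow 2)))).add
        (continuousOn_const.mul (h2.mul h3))
  -- integrability of the pieces
  have hint1 : IntervalIntegrable (fun s => s ^ (N - 1) * (u' s) ^ 2) volume ε R := by
    apply ContinuousOn.intervalIntegrable
    rw [uIcc_of_le hεR.le]
    exact (continuous_pow _).continuousOn.mul (hu'cont.pow 2)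
  have hint2 : IntervalIntegrable (fun s => s ^ (N - 1) * (u s) ^ 2) volume ε R := by
    apply ContinuousOn.intervalIntegrable
    rw [uIcc_of_le hεR.le]
    exact (continuous_pow _).continuousOn.mul (hucont.pow 2)
  have hinth : IntervalIntegrable h volume ε R :=
    (hint1.const_mul _).add (hint2.const_mul _)
  -- FTC
  have hFTC : ∫ s in ε..R, h s = G R - G ε :=
    intervalIntegral.integral_eq_sub_of_hasDeriv_right_of_le hεR.le hGcont
      (fun x hx => ((hGderiv x hx).hasDerivWithinAt)) hinth
  have hsplit : ∫ s in ε..R, h s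
      = (1 + (N:ℝ) / (p + 1) - (N:ℝ) / 2) * (∫ s in ε..R, s ^ (N - 1) * (u' s) ^ 2)
      + ((N:ℝ) / (p + 1) - (N:ℝ) / 2) * (∫ s in ε..R, s ^ (N - 1) * (u s) ^ 2) := by
    rw [hhdef]
    rw [intervalIntegral.integral_add (hint1.const_mul _) (hint2.const_mul _),
      intervalIntegral.integral_const_mul, intervalIntegral.integral_const_mul]
  rw [hsplit] at hFTC
  have hbd : G R - G ε
      = (N:ℝ) / (p + 1) * (R ^ (N - 1) * u R * u' R - ε ^ (N - 1) * u ε * u' ε)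
      + (1 / 2) * (R ^ N * (u' R) ^ 2 - ε ^ N * (u' ε) ^ 2)
      - (1 / 2) * (R ^ N * (u R) ^ 2 - ε ^ N * (u ε) ^ 2)
      + (1 / (p + 1)) * (R ^ N * u R ^ (p + 1) - ε ^ N * u ε ^ (p + 1)) := by
    rw [hGdef]; ring
  linear_combination hFTC + hbd
end
end

section
/- Suppose p ≥ p_S. Then there is no function u ∈ C²([0,∞)) such that u''(s) + ((N−1)/s)u'(s) + f(u(s)) = 0 for all s > 0, u'(0) = 0, u(s) → 0 as s → ∞, and u(s) > 0 for all s ≥ 0. -/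
open Real Set Filter Topology MeasureTheory

noncomputable section

set_option maxHeartbeats 8000000

/-- nonexistence of a positive entire solution decaying at infinity
for `p ≥ p_S`. -/
theorem no_entire_decaying_solution (N : ℕ) (hN : 3 ≤ N) (p : ℝ) (hp : 1 < p)
    (hpS : pSob N ≤ p)
    (u u' u'' : ℝ → ℝ)
    (hu : ∀ s ∈ Ici (0:ℝ), HasDerivWithinAt u (u' s) (Ici 0) s)
    (hu' : ∀ s ∈ Ici (0:ℝ), HasDerivWithinAt u' (u'' s) (Ici 0) s)
    (hu'' : ContinuousOn u'' (Ici 0))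
    (hode : ∀ s > (0:ℝ), u'' s + ((N : ℝ) - 1) / s * u' s + fNL p (u s) = 0)
    (hinit : u' 0 = 0)
    (hlim : Tendsto u atTop (𝓝 0))
    (hpos : ∀ s ≥ (0:ℝ), 0 < u s) :
    False := by
  obtain ⟨n, rfl⟩ : ∃ n, N = n + 3 := ⟨N - 3, by omega⟩
  have hp1 : (0:ℝ) < p - 1 := by linarith
  have hp1' : (0:ℝ) < p + 1 := by linarith
  have hode' : ∀ s > (0:ℝ), u'' s + ((n:ℝ)+2)/s * u' s + (-(u s) + u s ^ p) = 0 := by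
    intro s hs
    have h := hode s hs
    simp only [fNL] at h
    have h2 : ((n+3:ℕ):ℝ) - 1 = (n:ℝ) + 2 := by push_cast; ring
    rw [h2] at h
    linarith
  have huD : ∀ s : ℝ, 0 < s → HasDerivAt u (u' s) s := fun s hs =>
    (hu s hs.le).hasDerivAt (Ici_mem_nhds hs)
  have hu'D : ∀ s : ℝ, 0 < s → HasDerivAt u' (u'' s) s := fun s hs =>
    (hu' s hs.le).hasDerivAt (Ici_mem_nhds hs)
  have hucont : ContinuousOn u (Ici 0) := fun s hs => (hu s hs).continuousWithinAt
  have hu'cont : ContinuousOn u' (Ici 0) := fun s hs => (hu' s hs).continuousWithinAt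
  obtain ⟨F, hFdef⟩ : ∃ F : ℝ → ℝ, F = fun v => -v^2/2 + v ^ (p+1)/(p+1) := ⟨_, rfl⟩
  obtain ⟨E, hEdef⟩ : ∃ E : ℝ → ℝ, E = fun t => (u' t)^2/2 + F (u t) := ⟨_, rfl⟩
  obtain ⟨P, hPdef⟩ : ∃ P : ℝ → ℝ,
      P = fun t => t^(n+3) * E t + ((n:ℝ)+1)/2 * (t^(n+2) * (u t * u' t)) := ⟨_, rfl⟩
  have hFd : ∀ v : ℝ, 0 < v → HasDerivAt F (-v + v ^ p) v := by
    intro v hv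
    rw [hFdef]
    have h1 : HasDerivAt (fun x : ℝ => x ^ (p+1)) ((p+1) * v ^ p) v := by
      have := Real.hasDerivAt_rpow_const (x := v) (p := p+1) (Or.inl hv.ne')
      simpa using this
    have h2 := ((hasDerivAt_pow 2 v).neg.div_const 2).add (h1.div_const (p+1))
    refine h2.congr_deriv ?_
    field_simp
    ring
  have hEd : ∀ s : ℝ, 0 < s → HasDerivAt E (-(((n:ℝ)+2)/s) * (u' s)^2) s := by
    intro s hs
    rw [hEdef]
    have h1 := ((hu'D s hs).pow 2).div_const 2
    have h2 := (hFd (u s) (hpos s hs.le)).comp s (huD s hs)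
    have h3 := h1.add h2
    refine h3.congr_deriv ?_
    have h := hode' s hs
    have : u'' s = -(((n:ℝ)+2)/s * u' s) - (-(u s) + u s ^ p) := by linarith
    rw [this]
    ring
  have hupowcont : ContinuousOn (fun t => u t ^ (p+1)) (Ici 0) :=
    hucont.rpow_const (fun x hx => Or.inl (hpos x hx).ne')
  have hEcont : ContinuousOn E (Ici 0) := by
    rw [hEdef, hFdef]
    dsimp only
    apply ContinuousOn.add
    · exact (hu'cont.pow 2).div_const 2
    · exact ((hucont.pow 2).neg.div_const 2).add (hupowcont.div_const (p+1))
  -- global bound on u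
  obtain ⟨B, hB1, hB⟩ : ∃ B : ℝ, 1 ≤ B ∧ ∀ s ≥ (0:ℝ), u s ≤ B := by
    obtain ⟨R, hR⟩ := eventually_atTop.1 (hlim.eventually (gt_mem_nhds one_pos))
    obtain ⟨x, hx, hmax⟩ := isCompact_Icc.exists_isMaxOn
      (⟨0, by simp [le_max_right]⟩ : (Icc (0:ℝ) (max R 0)).Nonempty)
      (hucont.mono Icc_subset_Ici_self)
    refine ⟨max (u x) 1, le_max_right _ _, fun s hs => ?_⟩
    rcases le_total s (max R 0) with h | h
    · exact le_trans (hmax ⟨hs, h⟩) (le_max_left _ _)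
    · exact le_trans (hR s (le_trans (le_max_left R 0) h)).le (le_max_right _ _)
  have hBpos : (0:ℝ) < B := lt_of_lt_of_le one_pos hB1
  -- E is antitone on [a, ∞) for a > 0
  have hEanti : ∀ a : ℝ, 0 < a → AntitoneOn E (Ici a) := by
    intro a ha
    apply antitoneOn_of_deriv_nonpos (convex_Ici a)
      (hEcont.mono (Ici_subset_Ici.2 ha.le))
    · intro x hx
      rw [interior_Ici] at hx
      exact (hEd x (ha.trans hx)).differentiableAt.differentiableWithinAt
    · intro x hx
      rw [interior_Ici] at hx
      rw [(hEd x (ha.trans hx)).deriv]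
      have h0 : 0 ≤ ((n:ℝ)+2)/x * (u' x)^2 :=
        mul_nonneg (div_nonneg (by positivity) (ha.trans hx).le) (sq_nonneg _)
      linarith
  have hEle : ∀ a s : ℝ, 0 < a → a ≤ s → E s ≤ E a := fun a s ha has =>
    hEanti a ha self_mem_Ici has has
  -- E is nonnegative
  have hEnn : ∀ s : ℝ, 0 < s → 0 ≤ E s := by
    intro s0 hs0
    by_contra hneg
    push_neg at hneg
    have husq : Tendsto (fun s => (u s)^2) atTop (𝓝 0) := by
      have h := hlim.mul hlim
      rw [mul_zero] at h
      refine h.congr fun s => ?_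
      ring
    have hev : ∀ᶠ s in atTop, (u s)^2 < -(2 * E s0) :=
      husq.eventually (gt_mem_nhds (by linarith))
    obtain ⟨s1, h1, h2⟩ := (hev.and (eventually_ge_atTop s0)).exists
    have hE1 : E s1 ≤ E s0 := hEle s0 s1 hs0 h2
    have hup : (0:ℝ) ≤ u s1 ^ (p+1) := Real.rpow_nonneg (hpos s1 (by linarith)).le _
    have hident : E s1 = (u' s1)^2/2 - (u s1)^2/2 + u s1 ^ (p+1)/(p+1) := by
      simp only [hEdef, hFdef]; ring
    have hdiv : 0 ≤ u s1 ^ (p+1)/(p+1) := div_nonneg hup hp1'.le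
    nlinarith [sq_nonneg (u' s1)]
  -- choice of S: u^(p-1) ≤ 1/2 beyond S
  obtain ⟨S, hSpos, hSsmall⟩ : ∃ S : ℝ, 0 < S ∧ ∀ s, S ≤ s → u s ^ (p-1) ≤ 1/2 := by
    have hδpos : (0:ℝ) < (1/2 : ℝ) ^ (1/(p-1)) := Real.rpow_pos_of_pos (by norm_num) _
    obtain ⟨S0, hS0⟩ := eventually_atTop.1 (hlim.eventually (gt_mem_nhds hδpos))
    refine ⟨max S0 1, lt_of_lt_of_le one_pos (le_max_right _ _), fun s hs => ?_⟩
    have hs0 : (0:ℝ) ≤ s := le_trans (le_trans one_pos.le (le_max_right _ _)) hs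
    have h1 : u s ≤ (1/2 : ℝ) ^ (1/(p-1)) := (hS0 s (le_trans (le_max_left _ _) hs)).le
    calc u s ^ (p-1) ≤ ((1/2 : ℝ) ^ (1/(p-1))) ^ (p-1) :=
          Real.rpow_le_rpow (hpos s hs0).le h1 hp1.le
      _ = 1/2 := by
          rw [← Real.rpow_mul (by norm_num),
            show (1/(p-1)) * (p-1) = 1 by field_simp, Real.rpow_one]
  have hSx : ∀ s : ℝ, S ≤ s → 0 < s := fun s hs => lt_of_lt_of_le hSpos hs
  -- key: u'^2 ≥ 2E + u^2/2 on [S, ∞)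
  have hkey : ∀ s, S ≤ s → 2 * E s + (u s)^2/2 ≤ (u' s)^2 := by
    intro s hs
    have hs0 := hSx s hs
    have hu0 : 0 < u s := hpos s hs0.le
    have hsplit : u s ^ (p+1) = u s ^ (p-1) * (u s)^2 := by
      rw [show p+1 = (p-1)+2 by ring, Real.rpow_add hu0]
      congr 1
      rw [show ((2:ℝ) = ((2:ℕ):ℝ)) by norm_num, Real.rpow_natCast]
    have hIdent : (u' s)^2 = 2 * E s + (u s)^2 - 2 * (u s ^ (p+1))/(p+1) := by
      simp only [hEdef, hFdef]; ring
    rw [hsplit] at hIdent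
    have hb : u s ^ (p-1) * (u s)^2 ≤ 1/2 * (u s)^2 :=
      mul_le_mul_of_nonneg_right (hSsmall s hs) (sq_nonneg _)
    have h3 : 2 * (u s ^ (p-1) * (u s)^2)/(p+1) ≤ (u s)^2/2 := by
      rw [div_le_iff₀ hp1']
      nlinarith [Real.rpow_nonneg hu0.le (p-1), sq_nonneg (u s)]
    linarith
  have hu'sq : ∀ s, S ≤ s → (u s)^2/2 ≤ (u' s)^2 := by
    intro s hs
    have h := hkey s hs
    have hE := hEnn s (hSx s hs)
    linarith
  have h2E : ∀ s, S ≤ s → 2 * E s ≤ (u' s)^2 := by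
    intro s hs
    have := hkey s hs
    nlinarith [sq_nonneg (u s)]
  -- u' < 0 on [S, ∞)
  have hu'ne : ∀ s, S ≤ s → u' s ≠ 0 := by
    intro s hs h0
    have h := hu'sq s hs
    have hu0 := hpos s (hSx s hs).le
    rw [h0] at h
    nlinarith
  have hu'neg : ∀ s, S ≤ s → u' s < 0 := by
    intro a ha
    rcases lt_or_gt_of_ne (hu'ne a ha) with h | h
    · exact h
    exfalso
    have haS : 0 < a := hSx a ha
    have hall : ∀ s, a ≤ s → 0 ≤ u' s := by
      intro b hb
      by_contra hb'
      push_neg at hb'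
      have hcont : ContinuousOn u' (Icc a b) :=
        hu'cont.mono (fun x hx => le_trans haS.le hx.1)
      have h0mem : (0:ℝ) ∈ Icc (u' b) (u' a) := ⟨hb'.le, h.le⟩
      obtain ⟨c, hc, hc0⟩ := intermediate_value_Icc' hb hcont h0mem
      exact hu'ne c (le_trans ha hc.1) hc0
    have hmono : MonotoneOn u (Ici a) := by
      apply monotoneOn_of_deriv_nonneg (convex_Ici a)
        (hucont.mono (Ici_subset_Ici.2 haS.le))
      · intro x hx
        rw [interior_Ici] at hx
        exact (huD x (haS.trans hx)).differentiableAt.differentiableWithinAt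
      · intro x hx
        rw [interior_Ici] at hx
        rw [(huD x (haS.trans hx)).deriv]
        exact hall x hx.le
    have hle0 : u a ≤ 0 := by
      apply ge_of_tendsto hlim
      filter_upwards [eventually_ge_atTop a] with s hs
      exact hmono self_mem_Ici hs hs
    exact absurd hle0 (not_le.2 (hpos a haS.le))
  -- bound on |u'|
  have hESnn : 0 ≤ E S := hEnn S hSpos
  set M : ℝ := Real.sqrt (2 * E S + B^2) with hMdef
  have hM2 : M^2 = 2*E S + B^2 := Real.sq_sqrt (by positivity)
  have hMnn : 0 ≤ M := Real.sqrt_nonneg _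
  have hu'le : ∀ s, S ≤ s → -u' s ≤ M := by
    intro s hs
    have hs0 := hSx s hs
    have h1 : (u' s)^2 ≤ 2 * E S + B^2 := by
      have hident : (u' s)^2 = 2*E s - 2*F (u s) := by simp only [hEdef]; ring
      have hFb : -(F (u s)) ≤ (u s)^2/2 := by
        simp only [hFdef]
        have h4 : 0 ≤ u s ^ (p+1)/(p+1) :=
          div_nonneg (Real.rpow_nonneg (hpos s hs0.le).le (p+1)) hp1'.le
        linarith
      have hub : (u s)^2 ≤ B^2 := by nlinarith [hpos s hs0.le, hB s hs0.le]
      have hEs := hEle S s hSpos hs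
      nlinarith
    by_contra hcon
    push_neg at hcon
    have h7 : M^2 < (-u' s)^2 := by
      apply pow_lt_pow_left₀ hcon hMnn
      norm_num
    nlinarith [h7]
  obtain ⟨K, hKdef⟩ : ∃ K : ℝ, K = ((n:ℝ)+2) * M / S := ⟨_, rfl⟩
  have hKnn : 0 ≤ K := hKdef ▸ div_nonneg (mul_nonneg (by positivity) hMnn) hSpos.le
  -- E - K u is monotone on [S, ∞)
  have hWmono : MonotoneOn (fun t => E t - K * u t) (Ici S) := by
    apply monotoneOn_of_deriv_nonneg (convex_Ici S)
      ((hEcont.mono (Ici_subset_Ici.2 hSpos.le)).sub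
        (continuousOn_const.mul (hucont.mono (Ici_subset_Ici.2 hSpos.le))))
    · intro x hx
      rw [interior_Ici] at hx
      have hx0 : 0 < x := hSpos.trans hx
      exact ((hEd x hx0).sub ((huD x hx0).const_mul K)).differentiableAt.differentiableWithinAt
    · intro x hx
      rw [interior_Ici] at hx
      have hx0 : 0 < x := hSpos.trans hx
      change 0 ≤ deriv (E - fun y => K * u y) x
      rw [((hEd x hx0).sub ((huD x hx0).const_mul K)).deriv]
      have ha : 0 ≤ -u' x := by linarith [hu'neg x hx.le]
      have haM : -u' x ≤ M := hu'le x hx.le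
      have hdiv : ((n:ℝ)+2)/x ≤ ((n:ℝ)+2)/S :=
        div_le_div_of_nonneg_left (by positivity) hSpos hx.le
      have h1 : ((n:ℝ)+2)/x * (u' x)^2 ≤ ((n:ℝ)+2)/S * (u' x)^2 :=
        mul_le_mul_of_nonneg_right hdiv (sq_nonneg _)
      have h2 : ((n:ℝ)+2)/S * (u' x)^2 ≤ ((n:ℝ)+2)/S * (M * (-u' x)) := by
        apply mul_le_mul_of_nonneg_left _ (div_nonneg (by positivity) hSpos.le)
        nlinarith
      have h3 : K * (-(u' x)) = ((n:ℝ)+2)/S * (M * (-u' x)) := by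
        rw [hKdef]; ring
      linarith
  -- E ≤ K u on [S, ∞)
  have hEKu : ∀ s, S ≤ s → E s ≤ K * u s := by
    by_contra hcon
    push_neg at hcon
    obtain ⟨s0, hs0S, hW0⟩ := hcon
    have hs0pos : 0 < s0 := hSx s0 hs0S
    obtain ⟨L, hLdef⟩ : ∃ L : ℝ, L = E s0 - K * u s0 := ⟨_, rfl⟩
    have hLpos : 0 < L := by rw [hLdef]; linarith
    have hElow : ∀ s, s0 ≤ s → L ≤ E s := by
      intro s hs
      have hw : E s0 - K * u s0 ≤ E s - K * u s :=
        hWmono (mem_Ici.2 hs0S) (mem_Ici.2 (le_trans hs0S hs)) hs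
      have hus := hpos s (by linarith)
      have : 0 ≤ K * u s := mul_nonneg hKnn hus.le
      rw [hLdef]
      linarith [hw]
    have hsqpos : 0 < Real.sqrt (2*L) := Real.sqrt_pos.2 (by linarith)
    have hsq2 : (Real.sqrt (2*L))^2 = 2*L := Real.sq_sqrt (by linarith)
    have hu'le2 : ∀ s, s0 ≤ s → u' s ≤ -Real.sqrt (2*L) := by
      intro s hs
      have hsS : S ≤ s := le_trans hs0S hs
      have h2 : 2*L ≤ (u' s)^2 := le_trans (by linarith [hElow s hs]) (h2E s hsS)
      have hneg := hu'neg s hsS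
      have h3 : Real.sqrt (2*L) ≤ Real.sqrt ((u' s)^2) := Real.sqrt_le_sqrt h2
      rw [Real.sqrt_sq_eq_abs, abs_of_neg hneg] at h3
      linarith
    have hanti : AntitoneOn (fun t => u t + Real.sqrt (2*L) * t) (Ici s0) := by
      apply antitoneOn_of_deriv_nonpos (convex_Ici s0)
        ((hucont.mono (Ici_subset_Ici.2 hs0pos.le)).add (Continuous.continuousOn (by continuity)))
      · intro x hx
        rw [interior_Ici] at hx
        exact ((huD x (hs0pos.trans hx)).add
          ((hasDerivAt_id x).const_mul (Real.sqrt (2*L)))).differentiableAt.differentiableWithinAt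
      · intro x hx
        rw [interior_Ici] at hx
        have hD' : HasDerivAt (fun t => u t + Real.sqrt (2*L) * t)
            (u' x + Real.sqrt (2*L)) x := by
          exact ((huD x (hs0pos.trans hx)).add
            ((hasDerivAt_id x).const_mul (Real.sqrt (2*L)))).congr_deriv (by ring)
        change deriv (fun t => u t + Real.sqrt (2*L) * t) x ≤ 0
        rw [hD'.deriv]
        linarith [hu'le2 x hx.le]
    obtain ⟨s2, hs2def⟩ : ∃ s2 : ℝ, s2 = s0 + u s0 / Real.sqrt (2*L) + 1 := ⟨_, rfl⟩
    have hs2ge : s0 ≤ s2 := by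
      have : 0 ≤ u s0 / Real.sqrt (2*L) := div_nonneg (hpos s0 hs0pos.le).le hsqpos.le
      rw [hs2def]; linarith
    have hineq := hanti self_mem_Ici hs2ge hs2ge
    have hq : Real.sqrt (2*L) * (u s0 / Real.sqrt (2*L)) = u s0 :=
      mul_div_cancel₀ _ (ne_of_gt hsqpos)
    have hqs2 : Real.sqrt (2*L) * s2 = Real.sqrt (2*L) * s0 + u s0 + Real.sqrt (2*L) := by
      rw [hs2def, mul_add, mul_add, hq, mul_one]
    have hu2pos := hpos s2 (by linarith)
    simp only at hineq
    nlinarith [hineq, hqs2]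
  -- exponential decay of u
  obtain ⟨c, hcdef⟩ : ∃ c : ℝ, c = (Real.sqrt 2)⁻¹ := ⟨_, rfl⟩
  have hsqrt2 : (0:ℝ) < Real.sqrt 2 := Real.sqrt_pos.2 (by norm_num)
  have hcpos : 0 < c := hcdef ▸ inv_pos.2 hsqrt2
  have hu'c : ∀ s, S ≤ s → u' s + c * u s ≤ 0 := by
    intro s hs
    have hs0 := hSx s hs
    have hu0 := hpos s hs0.le
    have h1 : Real.sqrt ((u s)^2/2) ≤ Real.sqrt ((u' s)^2) := Real.sqrt_le_sqrt (hu'sq s hs)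
    rw [Real.sqrt_sq_eq_abs, abs_of_neg (hu'neg s hs)] at h1
    have h2 : Real.sqrt ((u s)^2/2) = c * u s := by
      rw [show (u s)^2/2 = (u s / Real.sqrt 2)^2 by
        rw [div_pow, Real.sq_sqrt (by norm_num : (0:ℝ) ≤ 2)]]
      rw [Real.sqrt_sq (by positivity), hcdef, div_eq_inv_mul]
    rw [h2] at h1
    linarith
  have hexpD : ∀ x : ℝ, HasDerivAt (fun t => Real.exp (c*t)) (c * Real.exp (c*x)) x := by
    intro x
    have := (Real.hasDerivAt_exp (c*x)).comp x ((hasDerivAt_id x).const_mul c)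
    exact this.congr_deriv (by ring)
  have hexpanti : AntitoneOn (fun t => u t * Real.exp (c * t)) (Ici S) := by
    apply antitoneOn_of_deriv_nonpos (convex_Ici S)
      ((hucont.mono (Ici_subset_Ici.2 hSpos.le)).mul (Continuous.continuousOn (by continuity)))
    · intro x hx
      rw [interior_Ici] at hx
      exact ((huD x (hSpos.trans hx)).mul (hexpD x)).differentiableAt.differentiableWithinAt
    · intro x hx
      rw [interior_Ici] at hx
      rw [((huD x (hSpos.trans hx)).mul (hexpD x)).deriv]
      have h := hu'c x hx.le
      have he := (Real.exp_pos (c*x)).le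
      have h2 : (u' x + c * u x) * Real.exp (c*x) ≤ 0 :=
        mul_nonpos_iff.2 (Or.inr ⟨h, he⟩)
      nlinarith [h2]
  obtain ⟨C1, hC1def⟩ : ∃ C1 : ℝ, C1 = u S * Real.exp (c * S) := ⟨_, rfl⟩
  have hC1pos : 0 < C1 := hC1def ▸ mul_pos (hpos S hSpos.le) (Real.exp_pos _)
  have hudecay : ∀ s, S ≤ s → u s ≤ C1 * Real.exp (-(c*s)) := by
    intro s hs
    have h := hexpanti self_mem_Ici hs hs
    simp only at h
    rw [Real.exp_neg, ← div_eq_mul_inv, le_div_iff₀ (Real.exp_pos _), hC1def]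
    exact h
  -- decay of u'
  obtain ⟨C2, hC2def⟩ : ∃ C2 : ℝ, C2 = Real.sqrt ((2*K + B) * C1) := ⟨_, rfl⟩
  have hC2nn : 0 ≤ C2 := hC2def ▸ Real.sqrt_nonneg _
  have h2KB : (0:ℝ) < 2*K + B := by linarith
  have hu'dec2 : ∀ s, S ≤ s → -u' s ≤ C2 * Real.exp (-(c/2*s)) := by
    intro s hs
    have hs0 := hSx s hs
    have h1 : (u' s)^2 ≤ 2 * E s + (u s)^2 := by
      have hident : (u' s)^2 = 2*E s - 2*F (u s) := by simp only [hEdef]; ring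
      have h4 : 0 ≤ u s ^ (p+1)/(p+1) := by
        have := Real.rpow_nonneg (hpos s hs0.le).le (p+1)
        positivity
      simp only [hFdef] at hident
      nlinarith
    have h2 : E s ≤ K * u s := hEKu s hs
    have h3 : (u s)^2 ≤ B * u s := by nlinarith [hpos s hs0.le, hB s hs0.le]
    have h4 := hudecay s hs
    have h5 : (2*K+B) * u s ≤ (2*K+B) * (C1 * Real.exp (-(c*s))) :=
      mul_le_mul_of_nonneg_left h4 h2KB.le
    have h6 : (u' s)^2 ≤ (2*K+B) * C1 * Real.exp (-(c*s)) := by nlinarith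
    have hsqrt := Real.sqrt_le_sqrt h6
    rw [Real.sqrt_sq_eq_abs] at hsqrt
    have hX : Real.sqrt ((2*K+B) * C1 * Real.exp (-(c*s))) = C2 * Real.exp (-(c/2*s)) := by
      rw [Real.sqrt_mul (mul_nonneg h2KB.le hC1pos.le), hC2def]
      congr 1
      rw [show Real.exp (-(c*s)) = (Real.exp (-(c/2*s)))^2 by
        rw [sq, ← Real.exp_add]; ring_nf]
      exact Real.sqrt_sq (Real.exp_pos _).le
    rw [hX] at hsqrt
    linarith [neg_abs_le (u' s), neg_le_abs (u' s)]
  -- bound on |P| and P → 0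
  obtain ⟨C3, hC3def⟩ : ∃ C3 : ℝ, C3 = K*C1 + ((n:ℝ)+1)/2 * B * C2 := ⟨_, rfl⟩
  have hPbound : ∀ s, max S 1 ≤ s →
      |P s| ≤ C3 * (s^(n+3) * Real.exp (-(c/2*s))) := by
    intro s hs
    have hsS : S ≤ s := le_trans (le_max_left _ _) hs
    have hs1 : (1:ℝ) ≤ s := le_trans (le_max_right _ _) hs
    have hs0 : (0:ℝ) < s := lt_of_lt_of_le one_pos hs1
    have hexple : Real.exp (-(c*s)) ≤ Real.exp (-(c/2*s)) := by
      apply Real.exp_le_exp.2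
      nlinarith [hcpos, hs0]
    have hE1 : E s ≤ K * C1 * Real.exp (-(c/2*s)) := by
      have h1 := hEKu s hsS
      have h2 := hudecay s hsS
      have h3 : K * u s ≤ K * (C1 * Real.exp (-(c*s))) := mul_le_mul_of_nonneg_left h2 hKnn
      have h4 : K * (C1 * Real.exp (-(c*s))) ≤ K * (C1 * Real.exp (-(c/2*s))) := by
        apply mul_le_mul_of_nonneg_left _ hKnn
        exact mul_le_mul_of_nonneg_left hexple hC1pos.le
      nlinarith
    have huu' : u s * (-u' s) ≤ B * (C2 * Real.exp (-(c/2*s))) := by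
      apply mul_le_mul (hB s hs0.le) (hu'dec2 s hsS) _ hBpos.le
      linarith [hu'neg s hsS]
    have hs23 : s^(n+2) ≤ s^(n+3) := pow_le_pow_right₀ hs1 (Nat.le_succ _)
    have hT1 : s^(n+3) * E s ≤ K * C1 * (s^(n+3) * Real.exp (-(c/2*s))) := by
      calc s^(n+3) * E s ≤ s^(n+3) * (K * C1 * Real.exp (-(c/2*s))) :=
            mul_le_mul_of_nonneg_left hE1 (pow_nonneg hs0.le _)
        _ = K * C1 * (s^(n+3) * Real.exp (-(c/2*s))) := by ring
    have hT1nn : 0 ≤ s^(n+3) * E s := mul_nonneg (by positivity) (hEnn s hs0)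
    have huu'nn : 0 ≤ u s * (-u' s) :=
      mul_nonneg (hpos s hs0.le).le (by linarith [hu'neg s hsS])
    have hT2 : ((n:ℝ)+1)/2 * (s^(n+2) * (u s * (-u' s)))
        ≤ ((n:ℝ)+1)/2 * B * C2 * (s^(n+3) * Real.exp (-(c/2*s))) := by
      have hm : s^(n+2) * (u s * (-u' s)) ≤ s^(n+3) * (B * (C2 * Real.exp (-(c/2*s)))) :=
        mul_le_mul hs23 huu' huu'nn (pow_nonneg hs0.le _)
      calc ((n:ℝ)+1)/2 * (s^(n+2) * (u s * (-u' s)))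
          ≤ ((n:ℝ)+1)/2 * (s^(n+3) * (B * (C2 * Real.exp (-(c/2*s))))) :=
            mul_le_mul_of_nonneg_left hm (by positivity)
        _ = ((n:ℝ)+1)/2 * B * C2 * (s^(n+3) * Real.exp (-(c/2*s))) := by ring
    have hT2nn : 0 ≤ ((n:ℝ)+1)/2 * (s^(n+2) * (u s * (-u' s))) :=
      mul_nonneg (by positivity) (mul_nonneg (pow_nonneg hs0.le _) huu'nn)
    have hPeq : P s = s^(n+3) * E s - ((n:ℝ)+1)/2 * (s^(n+2) * (u s * (-u' s))) := by
      simp only [hPdef]; ring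
    have hXnn : 0 ≤ s^(n+3) * Real.exp (-(c/2*s)) :=
      mul_nonneg (pow_nonneg hs0.le _) (Real.exp_pos _).le
    have hKC1X : 0 ≤ K * C1 * (s^(n+3) * Real.exp (-(c/2*s))) :=
      mul_nonneg (mul_nonneg hKnn hC1pos.le) hXnn
    have hBC2X : 0 ≤ ((n:ℝ)+1)/2 * B * C2 * (s^(n+3) * Real.exp (-(c/2*s))) :=
      mul_nonneg (mul_nonneg (mul_nonneg (by positivity) hBpos.le) hC2nn) hXnn
    have hC3X : (K*C1 + ((n:ℝ)+1)/2 * B * C2) * (s^(n+3) * Real.exp (-(c/2*s)))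
        = K * C1 * (s^(n+3) * Real.exp (-(c/2*s)))
          + ((n:ℝ)+1)/2 * B * C2 * (s^(n+3) * Real.exp (-(c/2*s))) := by ring
    rw [hPeq, abs_le, hC3def]
    constructor
    · linarith [hC3X, hT1, hT2, hT1nn, hT2nn, hKC1X, hBC2X]
    · linarith [hC3X, hT1, hT2, hT1nn, hT2nn, hKC1X, hBC2X]
  have hPtend : Tendsto P atTop (𝓝 0) := by
    have h1 : Tendsto (fun s : ℝ => (c/2*s)^(n+3) * Real.exp (-(c/2*s))) atTop (𝓝 0) :=
      (tendsto_pow_mul_exp_neg_atTop_nhds_zero (n+3)).comp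
        (Tendsto.const_mul_atTop (half_pos hcpos) tendsto_id)
    have h2 := h1.const_mul (C3 * (2/c)^(n+3))
    rw [mul_zero] at h2
    have h3 : Tendsto (fun s : ℝ => C3 * (s^(n+3) * Real.exp (-(c/2*s)))) atTop (𝓝 0) := by
      refine h2.congr fun s => ?_
      have hc0 : c ≠ 0 := ne_of_gt hcpos
      field_simp
      have e1 : c^3 * c⁻¹^3 = 1 := by rw [← mul_pow, mul_inv_cancel₀ hc0, one_pow]
      have e2 : c^n * c⁻¹^n = 1 := by rw [← mul_pow, mul_inv_cancel₀ hc0, one_pow]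
      have e3 : ((1:ℝ)/2)^n * 2^n = 1 := by rw [← mul_pow]; norm_num
      linear_combination (C3*s^3*s^n) * (c^n*c⁻¹^n*(((1:ℝ)/2)^n*2^n) * e1 + (((1:ℝ)/2)^n*2^n) * e2 + e3)
    exact squeeze_zero_norm' (eventually_atTop.2 ⟨max S 1, fun s hs => by
      simpa [Real.norm_eq_abs] using hPbound s hs⟩) h3
  -- Pohozaev: P is strictly decreasing
  have hPd : ∀ s : ℝ, 0 < s → HasDerivAt P
      (s^(n+2) * (((n:ℝ)+3) * F (u s) - ((n:ℝ)+1)/2 * (u s * (-(u s) + u s ^ p)))) s := by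
    intro s hs
    rw [hPdef]
    have hs0 : s ≠ 0 := ne_of_gt hs
    have hp1a : HasDerivAt (fun t : ℝ => t^(n+3)) (((n+3 : ℕ):ℝ) * s^(n+2)) s :=
      hasDerivAt_pow (n+3) s
    have hp2a : HasDerivAt (fun t : ℝ => t^(n+2)) (((n+2 : ℕ):ℝ) * s^(n+1)) s :=
      hasDerivAt_pow (n+2) s
    have h1 := hp1a.mul (hEd s hs)
    have h2 := hp2a.mul ((huD s hs).mul (hu'D s hs))
    have h3 := h1.add (h2.const_mul (((n:ℝ)+1)/2))
    refine h3.congr_deriv ?_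
    have hode2 := hode' s hs
    have hd : u'' s = -(((n:ℝ)+2)/s * u' s) - (-(u s) + u s ^ p) := by linarith
    have hq : u s ^ (p+1) = u s ^ p * u s := Real.rpow_add_one (hpos s hs.le).ne' p
    have c1 : s^(n+3) * s⁻¹ = s^(n+2) := by
      rw [pow_succ]
      field_simp
    have c2 : s^(n+2) * s⁻¹ = s^(n+1) := by
      rw [pow_succ]
      field_simp
    simp only [hEdef, hFdef]
    rw [hd, hq]
    push_cast
    simp only [Pi.mul_apply]
    linear_combination -(((n:ℝ)+2)*(u' s)^2) * c1
      - (((n:ℝ)+1)/2*((n:ℝ)+2)*(u s * u' s)) * c2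
  have hPcont : ContinuousOn P (Ici 0) := by
    rw [hPdef]
    apply ContinuousOn.add
    · exact (continuousOn_pow _).mul hEcont
    · exact continuousOn_const.mul ((continuousOn_pow _).mul (hucont.mul hu'cont))
  have hpS' : ((n:ℝ)+5) ≤ p * ((n:ℝ)+1) := by
    have hps : pSob (n+3) = ((n:ℝ)+5)/((n:ℝ)+1) := by
      simp only [pSob]
      push_cast
      ring_nf
    rw [hps] at hpS
    have hn1 : (0:ℝ) < (n:ℝ)+1 := by positivity
    rwa [div_le_iff₀ hn1] at hpS
  have hcp : ((n:ℝ)+3)/(p+1) ≤ ((n:ℝ)+1)/2 := by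
    rw [div_le_div_iff₀ hp1' (by norm_num : (0:ℝ) < 2)]
    have hexpand : ((n:ℝ)+1)*(p+1) = p*((n:ℝ)+1) + ((n:ℝ)+1) := by ring
    linarith [hpS', hexpand]
  have hPanti : StrictAntiOn P (Ici (0:ℝ)) := by
    apply strictAntiOn_of_deriv_neg (convex_Ici 0) hPcont
    intro x hx
    rw [interior_Ici] at hx
    rw [(hPd x hx).deriv]
    have hux := hpos x hx.le
    have hqpos : 0 < u x ^ p := Real.rpow_pos_of_pos hux p
    have hG : ((n:ℝ)+3) * F (u x) - ((n:ℝ)+1)/2 * (u x * (-(u x) + u x ^ p)) < 0 := by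
      have hq : u x ^ (p+1) = u x ^ p * u x := Real.rpow_add_one hux.ne' p
      simp only [hFdef]
      rw [hq]
      have hident : ((n:ℝ)+3) * (-(u x)^2/2 + u x ^ p * u x/(p+1))
          - ((n:ℝ)+1)/2 * (u x * (-(u x) + u x ^ p))
          = -(u x)^2 + (((n:ℝ)+3)/(p+1) - ((n:ℝ)+1)/2) * (u x ^ p * u x) := by
        field_simp
        ring
      rw [hident]
      have hcp2 : (((n:ℝ)+3)/(p+1) - ((n:ℝ)+1)/2) * (u x ^ p * u x) ≤ 0 :=
        mul_nonpos_iff.2 (Or.inr ⟨by linarith, (mul_nonneg hqpos.le hux.le)⟩)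
      linarith [hcp2, pow_pos hux 2]
    exact mul_neg_of_pos_of_neg (pow_pos hx _) hG
  have hP0 : P 0 = 0 := by
    rw [hPdef]
    simp
  have hP1neg : P 1 < 0 := by
    have := hPanti self_mem_Ici (by norm_num : (1:ℝ) ∈ Ici (0:ℝ)) one_pos
    rwa [hP0] at this
  have hP1nn : (0:ℝ) ≤ P 1 := by
    apply le_of_tendsto hPtend
    filter_upwards [eventually_ge_atTop (1:ℝ)] with s hs
    rcases eq_or_lt_of_le hs with h1 | h1
    · rw [← h1]
    · exact (hPanti (by norm_num : (1:ℝ) ∈ Ici (0:ℝ)) (mem_Ici.2 (by linarith)) h1).le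
  linarith
end
end

section
/- Suppose p > p_S and let y ∈ C²((−∞,T]) satisfy y''(t) + α y'(t) − y(t) + y(t)^p − m² e^{2mt} y(t) = 0 for all t ≤ T and y(t) → 1 as t → −∞. Then there exist constants C > 0 and T' ≤ T such that |y(t) − 1| ≤ C e^{2mt} for all t ≤ T'. -/
open Real Set Filter Topology MeasureTheory

noncomputable section

private lemma young' (γ x y : ℝ) (hγ : 0 < γ) : x*y ≤ γ*x^2 + 1/(4*γ)*y^2 := by
  rw [← sub_nonneg]
  have h : γ*x^2 + 1/(4*γ)*y^2 - x*y = (2*γ*x - y)^2/(4*γ) := by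
    field_simp
    ring
  rw [h]
  positivity

private lemma pow_bound {x : ℝ} (hx1 : 1/2 ≤ x) (hx2 : x ≤ 3/2) (q : ℝ) :
    x ^ q ≤ (3/2:ℝ) ^ q + (1/2:ℝ) ^ q := by
  have hx0 : (0:ℝ) < x := by linarith
  rcases le_or_gt 0 q with h | h
  · have h1 : x ^ q ≤ (3/2:ℝ) ^ q := Real.rpow_le_rpow hx0.le hx2 h
    have h2 : (0:ℝ) ≤ (1/2:ℝ) ^ q := (Real.rpow_pos_of_pos (by norm_num) q).le
    linarith
  · have h1 : x ^ q ≤ (1/2:ℝ) ^ q := Real.rpow_le_rpow_of_nonpos (by norm_num) hx1 h.le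
    have h2 : (0:ℝ) ≤ (3/2:ℝ) ^ q := (Real.rpow_pos_of_pos (by norm_num) q).le
    linarith

private lemma mono_of_deriv_nonpos (T : ℝ) (f f' : ℝ → ℝ)
    (hf : ∀ t ≤ T, HasDerivAt f (f' t) t)
    (hf' : ∀ t ≤ T, f' t ≤ 0) :
    ∀ s t, s ≤ t → t ≤ T → f t ≤ f s := by
  intro s t hst htT
  rcases eq_or_lt_of_le hst with rfl | h
  · exact le_rfl
  · have hcont : ContinuousOn f (Icc s t) := fun x hx =>
      (hf x (hx.2.trans htT)).continuousAt.continuousWithinAt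
    obtain ⟨ξ, hξ, hsl⟩ := exists_hasDerivAt_eq_slope f f' h hcont
      (fun x hx => hf x (hx.2.le.trans htT))
    have h1 : f' ξ ≤ 0 := hf' ξ (hξ.2.le.trans htT)
    have hne : t - s ≠ 0 := by intro hc; linarith [sub_eq_zero.mp hc]
    rw [eq_div_iff hne] at hsl
    nlinarith [hsl]
private lemma landau (T a B δ : ℝ) (ha : 0 ≤ a) (hB : 0 ≤ B) (hδ : 0 ≤ δ)
    (z z' z'' : ℝ → ℝ)
    (hz : ∀ t ≤ T, HasDerivAt z (z' t) t)
    (hz' : ∀ t ≤ T, HasDerivAt z' (z'' t) t)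
    (hzb : ∀ t ≤ T, |z t| ≤ δ)
    (hz''b : ∀ t ≤ T, |z'' t| ≤ a * |z' t| + B) :
    ∀ t ≤ T, |z' t| ≤ 4*δ/(min (1/2) (1/(2*a+1))) + 2*(min (1/2) (1/(2*a+1)))*B := by
  set h0 := min (1/2:ℝ) (1/(2*a+1)) with hh0def
  have h2a : (0:ℝ) < 2*a+1 := by linarith
  have hh0pos : 0 < h0 := lt_min (by norm_num) (by positivity)
  have hh0half : h0 ≤ 1/2 := min_le_left _ _
  have hah0 : a*h0 ≤ 1/2 := by
    have h1 : a*h0 ≤ a*(1/(2*a+1)) := mul_le_mul_of_nonneg_left (min_le_right _ _) ha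
    have h2 : a*(1/(2*a+1)) ≤ 1/2 := by
      rw [mul_one_div, div_le_div_iff₀ h2a (by norm_num)]
      linarith
    linarith
  intro t htT
  have hJsub : Icc (t-1) t ⊆ Iic T := fun s hs => le_trans hs.2 htT
  have hcontz' : ContinuousOn (fun s => |z' s|) (Icc (t-1) t) := fun s hs =>
    ((hz' s (hJsub hs)).continuousAt.abs).continuousWithinAt
  obtain ⟨w, hwJ, hwmax⟩ := (isCompact_Icc).exists_isMaxOn
    (nonempty_Icc.mpr (by linarith)) hcontz'
  have hS : ∀ s ∈ Icc (t-1) t, |z' s| ≤ |z' w| := hwmax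
  have hz''J : ∀ s ∈ Icc (t-1) t, |z'' s| ≤ a*|z' w| + B := by
    intro s hs
    have h1 := hz''b s (hJsub hs)
    have h2 := hS s hs
    nlinarith [mul_le_mul_of_nonneg_left h2 ha]
  have key : |z' w| ≤ 4*δ/h0 + 2*h0*B := by
    have hstep : ∀ u v : ℝ, u ∈ Icc (t-1) t → v ∈ Icc (t-1) t → v = u + h0 →
        (|z' u| ≤ 2*δ/h0 + h0*(a*|z' w| + B) ∧ |z' v| ≤ 2*δ/h0 + h0*(a*|z' w| + B)) := by
      intro u v huJ hvJ hvu
      have huv : u < v := by rw [hvu]; linarith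
      have hsub : Icc u v ⊆ Icc (t-1) t := fun s hs => ⟨le_trans huJ.1 hs.1, le_trans hs.2 hvJ.2⟩
      obtain ⟨ξ, hξ, hsl⟩ := exists_hasDerivAt_eq_slope z z' huv
        (fun s hs => (hz s (hJsub (hsub hs))).continuousAt.continuousWithinAt)
        (fun s hs => hz s (hJsub (hsub (Ioo_subset_Icc_self hs))))
      have hξJ : ξ ∈ Icc (t-1) t := hsub (Ioo_subset_Icc_self hξ)
      have hslb : |z' ξ| ≤ 2*δ/h0 := by
        rw [hsl, abs_div, abs_of_pos (by linarith : (0:ℝ) < v - u)]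
        have hnum : |z v - z u| ≤ 2*δ := by
          have h1 := abs_le.mp (hzb v (hJsub hvJ))
          have h2 := abs_le.mp (hzb u (hJsub huJ))
          rw [abs_le]; constructor <;> [linarith; linarith]
        have hden : v - u = h0 := by rw [hvu]; ring
        rw [hden]
        exact div_le_div_of_nonneg_right hnum hh0pos.le
      constructor
      · -- estimate at u via MVT of z' on [u, ξ]
        obtain ⟨ξ₂, hξ₂, hsl2⟩ := exists_hasDerivAt_eq_slope z' z'' hξ.1
          (fun s hs => (hz' s (hJsub (hsub ⟨hs.1, le_trans hs.2 hξ.2.le⟩))).continuousAt.continuousWithinAt)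
          (fun s hs => hz' s (hJsub (hsub ⟨hs.1.le, le_trans hs.2.le hξ.2.le⟩)))
        have hξ₂J : ξ₂ ∈ Icc (t-1) t := hsub ⟨hξ₂.1.le, le_trans hξ₂.2.le hξ.2.le⟩
        have hne : ξ - u ≠ 0 := by intro hc; nlinarith [sub_eq_zero.mp hc, hξ.1]
        rw [eq_div_iff hne] at hsl2
        have hzw : z' u = z' ξ - (ξ - u)*z'' ξ₂ := by linarith [hsl2]
        rw [hzw]
        have htri : |z' ξ - (ξ - u)*z'' ξ₂| ≤ |z' ξ| + |ξ - u| * |z'' ξ₂| := by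
          rw [sub_eq_add_neg]
          refine (abs_add_le _ _).trans ?_
          rw [abs_neg, abs_mul]
        have hb1 : |ξ - u| ≤ h0 := by
          rw [abs_of_pos (by linarith [hξ.1] : (0:ℝ) < ξ - u)]
          linarith [hξ.2]
        have hb2 := hz''J ξ₂ hξ₂J
        have hb3 : |ξ - u| * |z'' ξ₂| ≤ h0*(a*|z' w| + B) :=
          mul_le_mul hb1 hb2 (abs_nonneg _) hh0pos.le
        linarith
      · obtain ⟨ξ₂, hξ₂, hsl2⟩ := exists_hasDerivAt_eq_slope z' z'' hξ.2
          (fun s hs => (hz' s (hJsub (hsub ⟨le_trans hξ.1.le hs.1, hs.2⟩))).continuousAt.continuousWithinAt)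
          (fun s hs => hz' s (hJsub (hsub ⟨le_trans hξ.1.le hs.1.le, hs.2.le⟩)))
        have hξ₂J : ξ₂ ∈ Icc (t-1) t := hsub ⟨le_trans hξ.1.le hξ₂.1.le, hξ₂.2.le⟩
        have hne : v - ξ ≠ 0 := by intro hc; nlinarith [sub_eq_zero.mp hc, hξ.2]
        rw [eq_div_iff hne] at hsl2
        have hzw : z' v = z' ξ + (v - ξ)*z'' ξ₂ := by linarith [hsl2]
        rw [hzw]
        have htri : |z' ξ + (v - ξ)*z'' ξ₂| ≤ |z' ξ| + |v - ξ| * |z'' ξ₂| := by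
          refine (abs_add_le _ _).trans ?_
          rw [abs_mul]
        have hb1 : |v - ξ| ≤ h0 := by
          rw [abs_of_pos (by linarith [hξ.2] : (0:ℝ) < v - ξ)]
          linarith [hξ.1]
        have hb2 := hz''J ξ₂ hξ₂J
        have hb3 : |v - ξ| * |z'' ξ₂| ≤ h0*(a*|z' w| + B) :=
          mul_le_mul hb1 hb2 (abs_nonneg _) hh0pos.le
        linarith
    have hSbound : |z' w| ≤ 2*δ/h0 + h0*(a*|z' w| + B) := by
      rcases le_or_gt w (t - 1/2) with hc | hc
      · have huJ : w ∈ Icc (t-1) t := hwJ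
        have hvJ : w + h0 ∈ Icc (t-1) t := ⟨by linarith [hwJ.1], by linarith⟩
        exact (hstep w (w+h0) huJ hvJ rfl).1
      · have huJ : w - h0 ∈ Icc (t-1) t := ⟨by linarith, by linarith [hwJ.2]⟩
        have hvJ : w ∈ Icc (t-1) t := hwJ
        exact (hstep (w-h0) w huJ hvJ (by ring)).2
    have hhalfS : h0*(a*|z' w|) ≤ (1/2)*|z' w| := by
      have := mul_le_mul_of_nonneg_right hah0 (abs_nonneg (z' w))
      nlinarith
    have hδh0 : 0 ≤ 2*δ/h0 := by positivity
    have h1 : |z' w| ≤ 2*δ/h0 + h0*(a*|z' w|) + h0*B := by nlinarith [hSbound]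
    have h2 : 4*δ/h0 = 2*(2*δ/h0) := by ring
    rw [h2]
    linarith [h1, hhalfS]
  exact le_trans (hS t ⟨by linarith, le_refl t⟩) key

set_option maxHeartbeats 2000000 in
private lemma key_lemma (a q K m Cε T : ℝ) (ha : 0 < a) (hq : 0 < q) (hK : 0 < K)
    (hm : 0 < m) (z z' z'' R ε : ℝ → ℝ)
    (hz : ∀ t ≤ T, HasDerivAt z (z' t) t)
    (hz' : ∀ t ≤ T, HasDerivAt z' (z'' t) t)
    (heq : ∀ t ≤ T, z'' t = -a * z' t - q * z t - R t + ε t)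
    (hR : ∀ t ≤ T, |R t| ≤ K * (z t)^2)
    (hε : ∀ t ≤ T, |ε t| ≤ Cε * Real.exp (2*m*t))
    (hz0 : Tendsto z atBot (𝓝 0)) :
    ∃ C > 0, ∃ T' ≤ T, ∀ t ≤ T', |z t| ≤ C * Real.exp (2*m*t) := by
  have hCε0 : 0 ≤ Cε := by
    have h1 := hε T le_rfl
    have h2 := abs_nonneg (ε T)
    nlinarith [Real.exp_pos (2*m*T)]
  -- constants
  set β := min (min (1/2:ℝ) (q/2)) (min (a/5) (q/(16*a))) with hβdef
  have hβ0 : 0 < β := by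
    apply lt_min (lt_min (by norm_num) (by positivity)) (lt_min (by positivity) (by positivity))
  have hβ1 : β ≤ 1/2 := le_trans (min_le_left _ _) (min_le_left _ _)
  have hβ2 : β ≤ q/2 := le_trans (min_le_left _ _) (min_le_right _ _)
  have hβ3 : β ≤ a/5 := le_trans (min_le_right _ _) (min_le_left _ _)
  have hβ4 : 16*a*β ≤ q := by
    have h1 : β ≤ q/(16*a) := le_trans (min_le_right _ _) (min_le_right _ _)
    have h2 := (le_div_iff₀ (by positivity : (0:ℝ) < 16*a)).mp h1
    linarith
  set δ := min (1/2:ℝ) ((min (a/4) (β*q/8)) / K) with hδdef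
  have hδ0 : 0 < δ := lt_min (by norm_num) (by positivity)
  have hKδa : K*δ ≤ a/4 := by
    have h1 : K*δ ≤ K*((min (a/4) (β*q/8)) / K) :=
      mul_le_mul_of_nonneg_left (min_le_right _ _) hK.le
    rw [mul_div_cancel₀ _ hK.ne'] at h1
    exact le_trans h1 (min_le_left _ _)
  have hKδq : K*δ ≤ β*q/8 := by
    have h1 : K*δ ≤ K*((min (a/4) (β*q/8)) / K) :=
      mul_le_mul_of_nonneg_left (min_le_right _ _) hK.le
    rw [mul_div_cancel₀ _ hK.ne'] at h1
    exact le_trans h1 (min_le_right _ _)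
  clear_value β δ
  -- choose T₁ with |z| ≤ δ
  obtain ⟨T₁', hT₁'⟩ := eventually_atBot.mp (Metric.tendsto_nhds.mp hz0 δ hδ0)
  set T₁ := min T₁' T with hT₁def
  have hT₁T : T₁ ≤ T := min_le_right _ _
  have hδb : ∀ t ≤ T₁, |z t| ≤ δ := by
    intro t ht
    have h := hT₁' t (le_trans ht (min_le_left _ _))
    rw [Real.dist_eq, sub_zero] at h
    exact h.le
  -- bound on z''
  clear_value T₁
  set B := q*δ + K*δ^2 + Cε*Real.exp (2*m*T₁) with hBdef
  have hB0 : 0 ≤ B := by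
    rw [hBdef]
    have h1 : 0 ≤ q*δ := mul_nonneg hq.le hδ0.le
    have h2 : 0 ≤ K*δ^2 := mul_nonneg hK.le (sq_nonneg _)
    have h3 : 0 ≤ Cε*Real.exp (2*m*T₁) := mul_nonneg hCε0 (Real.exp_pos _).le
    linarith
  clear_value B
  have hz''b : ∀ t ≤ T₁, |z'' t| ≤ a*|z' t| + B := by
    intro t ht
    have htT := le_trans ht hT₁T
    have h1 : |R t| ≤ K*δ^2 := by
      have h := hR t htT
      have h2 := hδb t ht
      have hzz : (z t)^2 ≤ δ^2 := by
        nlinarith [sq_abs (z t), mul_self_le_mul_self (abs_nonneg (z t)) h2]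
      exact le_trans h (by nlinarith [mul_le_mul_of_nonneg_left hzz hK.le])
    have h2 : |ε t| ≤ Cε*Real.exp (2*m*T₁) := by
      refine le_trans (hε t htT) (mul_le_mul_of_nonneg_left ?_ hCε0)
      exact Real.exp_le_exp.mpr (by nlinarith)
    have h3 := abs_le.mp (hδb t ht)
    have h4 := abs_le.mp h1
    have h5 := abs_le.mp h2
    have p1 : a*z' t ≤ a*|z' t| := mul_le_mul_of_nonneg_left (le_abs_self _) ha.le
    have p2 : a*(-|z' t|) ≤ a*z' t := mul_le_mul_of_nonneg_left (neg_abs_le _) ha.le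
    have q1 : q*z t ≤ q*δ := mul_le_mul_of_nonneg_left h3.2 hq.le
    have q2 : q*(-δ) ≤ q*z t := mul_le_mul_of_nonneg_left h3.1 hq.le
    rw [heq t htT, abs_le]
    constructor <;> linarith [p1, p2, q1, q2, h4.1, h4.2, h5.1, h5.2]
  -- derivative bound
  have hM := landau T₁ a B δ ha.le hB0 hδ0.le z z' z''
    (fun t ht => hz t (le_trans ht hT₁T)) (fun t ht => hz' t (le_trans ht hT₁T))
    hδb hz''b
  set h0 := min (1/2:ℝ) (1/(2*a+1)) with hh0def
  set M := 4*δ/h0 + 2*h0*B with hMdef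
  have hh0pos : 0 < h0 := lt_min (by norm_num) (by positivity)
  clear_value h0
  have hM0 : 0 ≤ M := by
    rw [hMdef]
    have h1 : 0 ≤ 4*δ/h0 := div_nonneg (by linarith) hh0pos.le
    have h2 : 0 ≤ 2*h0*B := mul_nonneg (by linarith) hB0
    linarith
  clear_value M
  have hMb : ∀ t ≤ T₁, |z' t| ≤ M := hM
  -- energy function
  set F : ℝ → ℝ := fun s => z' s*z' s/2 + q*(z s*z s)/2 + β*(z s*z' s) with hFdef
  set F' : ℝ → ℝ := fun s => z' s*z'' s + q*(z s*z' s) + β*(z s*z'' s + z' s*z' s) with hF'def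
  have hFval : ∀ s, F s = z' s*z' s/2 + q*(z s*z s)/2 + β*(z s*z' s) := fun s => by rw [hFdef]
  have hF'val : ∀ s, F' s = z' s*z'' s + q*(z s*z' s) + β*(z s*z'' s + z' s*z' s) :=
    fun s => by rw [hF'def]
  clear_value F F'
  have hF : ∀ t ≤ T, HasDerivAt F (F' t) t := by
    intro t ht
    have h1 := hz t ht
    have h2 := hz' t ht
    have d1 : HasDerivAt (fun s => z' s*z' s/2) ((z'' t*z' t + z' t*z'' t)/2) t :=
      (h2.mul h2).div_const 2
    have d2 : HasDerivAt (fun s => q*(z s*z s)/2) (q*(z' t*z t + z t*z' t)/2) t :=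
      ((h1.mul h1).const_mul q).div_const 2
    have d3 : HasDerivAt (fun s => β*(z s*z' s)) (β*(z' t*z' t + z t*z'' t)) t :=
      (h1.mul h2).const_mul β
    have hsum := (d1.add d2).add d3
    have : F = fun s => z' s*z' s/2 + q*(z s*z s)/2 + β*(z s*z' s) := hFdef
    rw [this, hF'val t]
    exact hsum.congr_deriv (by ring)
  -- κ
  set κ := min (a/(1+β)) (β*q/(4*(q+β))) with hκdef
  have hκ0 : 0 < κ :=
    lt_min (div_pos ha (by linarith)) (div_pos (mul_pos hβ0 hq) (by linarith))
  have hκ4 : (0:ℝ) < κ + 4*m := by linarith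
  have hκ1 : κ*(1+β) ≤ a := by
    have h1 : κ ≤ a/(1+β) := min_le_left _ _
    have h2 := (le_div_iff₀ (by linarith : (0:ℝ) < 1+β)).mp h1
    linarith
  have hκ2 : κ*(4*(q+β)) ≤ β*q := by
    have h1 : κ ≤ β*q/(4*(q+β)) := min_le_right _ _
    have h2 := (le_div_iff₀ (by linarith : (0:ℝ) < 4*(q+β))).mp h1
    linarith
  have hC10 : (0:ℝ) < 1/β + β/q := by
    have h1 := div_pos hβ0 hq
    have h2 := div_pos one_pos hβ0
    linarith
  clear_value κ
  -- differential inequality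
  have hdiff : ∀ t ≤ T₁, F' t + κ*F t ≤ (1/β + β/q)*(ε t)^2 := by
    intro t ht
    have htT := le_trans ht hT₁T
    have hxδ := hδb t ht
    have hRt := hR t htT
    have hrb : |R t| ≤ K*δ*|z t| := by
      have h1 : |z t| * |z t| ≤ δ*|z t| := mul_le_mul_of_nonneg_right hxδ (abs_nonneg _)
      calc |R t| ≤ K*(z t)^2 := hRt
        _ = K*(|z t| * |z t|) := by rw [← sq_abs]; ring
        _ ≤ K*(δ*|z t|) := mul_le_mul_of_nonneg_left h1 hK.le
        _ = K*δ*|z t| := by ring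
    have A1 : -(R t*z' t) ≤ K*δ/2*(z t*z t) + K*δ/2*(z' t*z' t) := by
      have h2 : |z t| * |z' t| ≤ (z t*z t + z' t*z' t)/2 := by
        nlinarith [sq_nonneg (|z t| - |z' t|), abs_mul_abs_self (z t), abs_mul_abs_self (z' t)]
      have h3 : -(R t*z' t) ≤ |R t| * |z' t| := by
        rw [← abs_mul]; exact neg_le_abs _
      have h4 : |R t| * |z' t| ≤ K*δ*(|z t| * |z' t|) := by
        have h5 := mul_le_mul_of_nonneg_right hrb (abs_nonneg (z' t))
        nlinarith [h5]
      have h6 : K*δ*(|z t| * |z' t|) ≤ K*δ*((z t*z t + z' t*z' t)/2) :=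
        mul_le_mul_of_nonneg_left h2 (mul_nonneg hK.le hδ0.le)
      have h7 : K*δ*((z t*z t + z' t*z' t)/2) = K*δ/2*(z t*z t) + K*δ/2*(z' t*z' t) := by
        ring
      linarith [h3, h4, h6, h7]
    have A2 : ε t*z' t ≤ β/4*(z' t*z' t) + 1/β*(ε t*ε t) := by
      have h := young' (β/4) (z' t) (ε t) (by linarith)
      rw [show 4*(β/4) = β by ring] at h
      have h3 : β/4*(z' t)^2 + 1/β*(ε t)^2 = β/4*(z' t*z' t) + 1/β*(ε t*ε t) := by ring
      have h4 : ε t*z' t = z' t*ε t := by ring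
      linarith [h, h3, h4]
    have A3 : β*(z t*ε t) ≤ β*q/4*(z t*z t) + β/q*(ε t*ε t) := by
      have h := young' (q/4) (z t) (ε t) (by linarith)
      rw [show 4*(q/4) = q by ring] at h
      have h2 := mul_le_mul_of_nonneg_left h hβ0.le
      have h3 : β*(q/4*(z t)^2 + 1/q*(ε t)^2) = β*q/4*(z t*z t) + β/q*(ε t*ε t) := by ring
      linarith [h2, h3]
    have A4 : -(a*β*(z t*z' t)) ≤ a/8*(z' t*z' t) + 2*a*β^2*(z t*z t) := by
      have h := young' (a/8) (z' t) (-(a*β*z t)) (by linarith)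
      have hid : 1/(4*(a/8))*(-(a*β*z t))^2 = 2*a*β^2*(z t*z t) := by
        field_simp
        ring
      rw [hid] at h
      have h3 : a/8*(z' t)^2 = a/8*(z' t*z' t) := by ring
      have h4 : z' t*(-(a*β*z t)) = -(a*β*(z t*z' t)) := by ring
      linarith [h, h3, h4]
    have A5 : -(β*(R t*z t)) ≤ β*q/8*(z t*z t) := by
      have h3 : -(R t*z t) ≤ |R t| * |z t| := by rw [← abs_mul]; exact neg_le_abs _
      have h4 : |R t| * |z t| ≤ K*δ*(|z t| * |z t|) := by
        have h5 := mul_le_mul_of_nonneg_right hrb (abs_nonneg (z t))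
        nlinarith [h5]
      have h5 : K*δ*(|z t| * |z t|) = K*δ*(z t*z t) := by rw [abs_mul_abs_self]
      have h6 : -(β*(R t*z t)) ≤ β*(K*δ*(z t*z t)) := by
        have h7 := mul_le_mul_of_nonneg_left (le_trans h3 (h5 ▸ h4)) hβ0.le
        have h8 : β*(-(R t*z t)) = -(β*(R t*z t)) := by ring
        linarith [h7, h8]
      have h7 : β*(K*δ*(z t*z t)) ≤ β*((β*q/8)*(z t*z t)) :=
        mul_le_mul_of_nonneg_left (mul_le_mul_of_nonneg_right hKδq (mul_self_nonneg _)) hβ0.le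
      have h8 : β*((β*q/8)*(z t*z t)) ≤ β*q/8*(z t*z t) := by
        have h9 : 0 ≤ (β*q/8)*(z t*z t) :=
          mul_nonneg (div_nonneg (mul_nonneg hβ0.le hq.le) (by norm_num)) (mul_self_nonneg _)
        have h10 := mul_le_mul_of_nonneg_right (show β ≤ 1 by linarith) h9
        have h11 : 1*((β*q/8)*(z t*z t)) = β*q/8*(z t*z t) := by ring
        linarith [h10, h11]
      linarith
    have hFub : F t ≤ (1+β)/2*(z' t*z' t) + (q+β)/2*(z t*z t) := by
      rw [hFval t]
      nlinarith [mul_nonneg hβ0.le (sq_nonneg (z t - z' t))]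
    have A6 : κ*F t ≤ a/2*(z' t*z' t) + β*q/8*(z t*z t) := by
      have h1 := mul_le_mul_of_nonneg_left hFub hκ0.le
      have h2 := mul_le_mul_of_nonneg_right hκ1 (mul_self_nonneg (z' t))
      have h3 := mul_le_mul_of_nonneg_right hκ2 (mul_self_nonneg (z t))
      nlinarith [h1, h2, h3]
    have hF't : F' t = -a*(z' t*z' t) - (R t*z' t) + ε t*z' t + β*(z' t*z' t)
        - (a*β*(z t*z' t)) - β*q*(z t*z t) - (β*(R t*z t)) + β*(z t*ε t) := by
      rw [hF'val t, heq t htT]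
      ring
    have B2 : K*δ*(z' t*z' t) ≤ a/4*(z' t*z' t) :=
      mul_le_mul_of_nonneg_right hKδa (mul_self_nonneg _)
    have B3 : β*(z' t*z' t) ≤ a/5*(z' t*z' t) :=
      mul_le_mul_of_nonneg_right hβ3 (mul_self_nonneg _)
    have B4 : K*δ*(z t*z t) ≤ β*q/8*(z t*z t) :=
      mul_le_mul_of_nonneg_right hKδq (mul_self_nonneg _)
    have B5 : 2*a*β^2*(z t*z t) ≤ β*q/8*(z t*z t) := by
      have h1 := mul_le_mul_of_nonneg_right hβ4 (mul_self_nonneg (z t))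
      nlinarith [mul_le_mul_of_nonneg_left h1 (show (0:ℝ) ≤ β/8 by linarith)]
    have B6 : 0 ≤ β*q*(z t*z t) :=
      mul_nonneg (mul_nonneg hβ0.le hq.le) (mul_self_nonneg _)
    rw [hF't]
    have g1 : (1/β + β/q)*(ε t)^2 = 1/β*(ε t*ε t) + β/q*(ε t*ε t) := by ring
    linarith [A1, A2, A3, A4, A5, A6, B2, B3, B4, B5, B6, g1]
  -- Lyapunov function Φ
  set D := (1/β + β/q)*Cε^2/(κ+4*m) with hDdef
  have hD0 : 0 ≤ D := by
    rw [hDdef]; exact div_nonneg (mul_nonneg hC10.le (sq_nonneg _)) hκ4.le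
  clear_value D
  set Φ : ℝ → ℝ := fun s => Real.exp (κ*s)*F s - D*Real.exp ((κ+4*m)*s) with hΦdef
  set Φ' : ℝ → ℝ := fun s => Real.exp (κ*s)*κ*F s + Real.exp (κ*s)*F' s
      - D*(Real.exp ((κ+4*m)*s)*(κ+4*m)) with hΦ'def
  have hΦval : ∀ s, Φ s = Real.exp (κ*s)*F s - D*Real.exp ((κ+4*m)*s) := fun s => by rw [hΦdef]
  have hΦ'val : ∀ s, Φ' s = Real.exp (κ*s)*κ*F s + Real.exp (κ*s)*F' s
      - D*(Real.exp ((κ+4*m)*s)*(κ+4*m)) := fun s => by rw [hΦ'def]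
  clear_value Φ Φ'
  have hΦd : ∀ t ≤ T, HasDerivAt Φ (Φ' t) t := by
    intro t ht
    have he1 : HasDerivAt (fun s => Real.exp (κ*s)) (Real.exp (κ*t)*κ) t := by
      simpa using ((hasDerivAt_id t).const_mul κ).exp
    have he2 : HasDerivAt (fun s => Real.exp ((κ+4*m)*s)) (Real.exp ((κ+4*m)*t)*(κ+4*m)) t := by
      simpa using ((hasDerivAt_id t).const_mul (κ+4*m)).exp
    have hsum := (he1.mul (hF t ht)).sub (he2.const_mul D)
    have hΦeq : Φ = fun s => Real.exp (κ*s)*F s - D*Real.exp ((κ+4*m)*s) := hΦdef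
    rw [hΦeq, hΦ'val t]
    exact hsum
  have hΦ'neg : ∀ t ≤ T₁, Φ' t ≤ 0 := by
    intro t ht
    have htT := le_trans ht hT₁T
    have hd := hdiff t ht
    have hε2 : (ε t)^2 ≤ Cε^2*(Real.exp (2*m*t)*Real.exp (2*m*t)) := by
      have h := hε t htT
      nlinarith [abs_nonneg (ε t), sq_abs (ε t)]
    have hee : Real.exp (2*m*t)*Real.exp (2*m*t) = Real.exp ((4*m)*t) := by
      rw [← Real.exp_add]; ring_nf
    have h2 : (1/β + β/q)*(ε t)^2 ≤ (1/β + β/q)*(Cε^2*Real.exp ((4*m)*t)) := by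
      refine mul_le_mul_of_nonneg_left ?_ hC10.le
      calc (ε t)^2 ≤ Cε^2*(Real.exp (2*m*t)*Real.exp (2*m*t)) := hε2
        _ = Cε^2*Real.exp ((4*m)*t) := by rw [hee]
    have h1 : Real.exp (κ*t)*(F' t + κ*F t) ≤ Real.exp (κ*t)*((1/β + β/q)*(ε t)^2) :=
      mul_le_mul_of_nonneg_left hd (Real.exp_pos _).le
    have h3 := mul_le_mul_of_nonneg_left h2 (Real.exp_pos (κ*t)).le
    have hsplit : Real.exp (κ*t)*Real.exp ((4*m)*t) = Real.exp ((κ+4*m)*t) := by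
      rw [← Real.exp_add]; ring_nf
    have hDval : D*(Real.exp ((κ+4*m)*t)*(κ+4*m)) =
        Real.exp (κ*t)*((1/β + β/q)*(Cε^2*Real.exp ((4*m)*t))) := by
      rw [hDdef, ← hsplit]
      field_simp
    rw [hΦ'val t, hDval]
    linarith [h1, h3]
  -- upper bound on F
  have hFbd : ∀ t ≤ T₁, F t ≤ M^2 + (q+1)*δ^2 + 1 := by
    intro t ht
    have h1 : z t*z' t ≤ δ*M := by
      calc z t*z' t ≤ |z t*z' t| := le_abs_self _
        _ = |z t| * |z' t| := abs_mul _ _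
        _ ≤ δ*M := mul_le_mul (hδb t ht) (hMb t ht) (abs_nonneg _) hδ0.le
    have h2 : z' t*z' t ≤ M*M := by
      nlinarith [hMb t ht, le_abs_self (z' t), neg_abs_le (z' t)]
    have h3 : z t*z t ≤ δ*δ := by
      nlinarith [hδb t ht, le_abs_self (z t), neg_abs_le (z t)]
    rw [hFval t]
    nlinarith [mul_le_mul_of_nonneg_left h1 hβ0.le, mul_le_mul_of_nonneg_left h3 hq.le,
      sq_nonneg (δ - M), mul_le_mul_of_nonneg_right hβ1 (mul_nonneg hδ0.le hM0)]
  have hmono := mono_of_deriv_nonpos T₁ Φ Φ' (fun s hs => hΦd s (le_trans hs hT₁T)) hΦ'neg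
  -- F t ≤ D e^{4mt}
  have hkey : ∀ t ≤ T₁, F t ≤ D*Real.exp ((4*m)*t) := by
    intro t ht
    apply le_of_forall_pos_le_add
    intro η hη
    have hFb0 : (0:ℝ) < M^2 + (q+1)*δ^2 + 1 := by positivity
    set L := Real.log (η/(M^2 + (q+1)*δ^2 + 1)) with hLdef
    have hexpL : Real.exp L = η/(M^2 + (q+1)*δ^2 + 1) := Real.exp_log (by positivity)
    have hex : ∃ t₀ ≤ t, Real.exp (κ*(t₀-t))*(M^2+(q+1)*δ^2+1) ≤ η := by
      rcases le_total t (t + L/κ - 1) with hcase | hcase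
      · refine ⟨t, le_rfl, ?_⟩
        have h3 : 1 ≤ L/κ := by linarith
        have h4 := (le_div_iff₀ hκ0).mp h3
        have h5 : (1:ℝ) ≤ Real.exp L := by
          rw [← Real.exp_zero]
          exact Real.exp_le_exp.mpr (by linarith)
        rw [hexpL, le_div_iff₀ hFb0] at h5
        rw [sub_self, mul_zero, Real.exp_zero, one_mul]
        linarith
      · refine ⟨t + L/κ - 1, by linarith, ?_⟩
        have h5 : κ*((t + L/κ - 1) - t) = L - κ := by
          rw [show (t + L/κ - 1) - t = L/κ - 1 by ring, mul_sub, mul_one,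
            mul_div_cancel₀ _ hκ0.ne']
        have h6 : Real.exp (L - κ) ≤ Real.exp L := Real.exp_le_exp.mpr (by linarith)
        rw [h5]
        calc Real.exp (L-κ)*(M^2+(q+1)*δ^2+1)
            ≤ Real.exp L*(M^2+(q+1)*δ^2+1) := mul_le_mul_of_nonneg_right h6 hFb0.le
          _ = η := by rw [hexpL, div_mul_cancel₀ _ hFb0.ne']
    obtain ⟨t₀, ht₀, hexp⟩ := hex
    have hmono' := hmono t₀ t ht₀ ht
    rw [hΦval t, hΦval t₀] at hmono'
    have hFb := hFbd t₀ (le_trans ht₀ ht)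
    have h9 := mul_le_mul_of_nonneg_left hFb (Real.exp_pos (κ*t₀)).le
    have h8 : Real.exp (κ*t)*F t ≤
        Real.exp (κ*t₀)*(M^2+(q+1)*δ^2+1) + D*Real.exp ((κ+4*m)*t) := by
      linarith [hmono', h9, mul_nonneg hD0 (Real.exp_pos ((κ+4*m)*t₀)).le]
    have hid1 : Real.exp (κ*t₀)*(M^2+(q+1)*δ^2+1) =
        Real.exp (κ*t)*(Real.exp (κ*(t₀-t))*(M^2+(q+1)*δ^2+1)) := by
      rw [← mul_assoc, ← Real.exp_add]
      ring_nf
    have hid2 : D*Real.exp ((κ+4*m)*t) = Real.exp (κ*t)*(D*Real.exp ((4*m)*t)) := by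
      rw [show (κ+4*m)*t = κ*t + (4*m)*t by ring, Real.exp_add]
      ring
    have h10 : Real.exp (κ*t)*(Real.exp (κ*(t₀-t))*(M^2+(q+1)*δ^2+1)) ≤ Real.exp (κ*t)*η :=
      mul_le_mul_of_nonneg_left hexp (Real.exp_pos _).le
    have hgoal2 : Real.exp (κ*t)*(F t) ≤ Real.exp (κ*t)*(D*Real.exp ((4*m)*t) + η) := by
      have hexpand : Real.exp (κ*t)*(D*Real.exp ((4*m)*t) + η) =
          Real.exp (κ*t)*(D*Real.exp ((4*m)*t)) + Real.exp (κ*t)*η := by ring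
      rw [hexpand]
      linarith [h8, h10, hid1, hid2]
    exact (mul_le_mul_iff_right₀ (Real.exp_pos (κ*t))).mp hgoal2
  -- conclusion
  refine ⟨Real.sqrt (4*D/q) + 1, by positivity, T₁, hT₁T, ?_⟩
  intro t ht
  have hFt := hkey t ht
  have hFlow : q/4*(z t*z t) ≤ F t := by
    rw [hFval t]
    have hh : 0 ≤ β*(z t + z' t)^2 := mul_nonneg hβ0.le (sq_nonneg _)
    have hbr : β*(z t + z' t)^2 = β*(z t*z t) + 2*(β*(z t*z' t)) + β*(z' t*z' t) := by ring
    have p2 : β*(z t*z t) ≤ q/2*(z t*z t) := mul_le_mul_of_nonneg_right hβ2 (mul_self_nonneg _)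
    have p3 : β*(z' t*z' t) ≤ 1/2*(z' t*z' t) := mul_le_mul_of_nonneg_right hβ1 (mul_self_nonneg _)
    linarith [hh, hbr, p2, p3, mul_self_nonneg (z' t), mul_self_nonneg (z t)]
  have hx2 : (z t)^2 ≤ 4*(D*Real.exp ((4*m)*t))/q := by
    rw [le_div_iff₀ hq]
    have hb : (z t)^2*q = 4*(q/4*(z t*z t)) := by ring
    linarith [hFlow, hFt, hb]
  have h1 : |z t| = Real.sqrt ((z t)^2) := (Real.sqrt_sq_eq_abs _).symm
  rw [h1]
  have h2 : Real.sqrt ((z t)^2) ≤ Real.sqrt (4*D/q*(Real.exp (2*m*t))^2) := by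
    apply Real.sqrt_le_sqrt
    have hee : (Real.exp (2*m*t))^2 = Real.exp ((4*m)*t) := by
      rw [sq, ← Real.exp_add]; ring_nf
    rw [hee]
    calc (z t)^2 ≤ 4*(D*Real.exp ((4*m)*t))/q := hx2
      _ = 4*D/q*Real.exp ((4*m)*t) := by ring
  refine le_trans h2 ?_
  rw [Real.sqrt_mul (by positivity : (0:ℝ) ≤ 4*D/q), Real.sqrt_sq (Real.exp_pos _).le]
  have h3 : Real.sqrt (4*D/q) ≤ Real.sqrt (4*D/q) + 1 := by linarith
  exact mul_le_mul_of_nonneg_right h3 (Real.exp_pos _).le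



private lemma rpow_taylor (p : ℝ) (hp : 1 < p) (u : ℝ) (hu : |u - 1| ≤ 1/2) :
    |u ^ p - u - (p-1)*(u-1)| ≤ (p*(p-1)*((3/2:ℝ)^(p-2) + (1/2:ℝ)^(p-2))) * (u-1)^2 := by
  obtain ⟨hu1, hu2⟩ := abs_le.mp hu
  have hul : (1/2:ℝ) ≤ u := by linarith
  have huu : u ≤ (3/2:ℝ) := by linarith
  set Kb := (3/2:ℝ)^(p-2) + (1/2:ℝ)^(p-2) with hKbdef
  have hKb0 : 0 < Kb := by
    have := Real.rpow_pos_of_pos (show (0:ℝ) < 3/2 by norm_num) (p-2)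
    have := Real.rpow_pos_of_pos (show (0:ℝ) < 1/2 by norm_num) (p-2)
    positivity
  have hgoal : |u ^ p - 1 - p*(u-1)| ≤ (p*(p-1)*Kb) * (u-1)^2 := by
    have hgderiv : ∀ x : ℝ, 1/2 ≤ x → HasDerivAt (fun x : ℝ => x ^ p - 1 - p*(x-1))
        (p*x^(p-1) - p) x := by
      intro x hx
      have h1 : HasDerivAt (fun x : ℝ => x ^ p) (p*x^(p-1)) x :=
        Real.hasDerivAt_rpow_const (Or.inl (by linarith))
      have h2 : HasDerivAt (fun x : ℝ => p*(x-1)) p x := by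
        simpa using ((hasDerivAt_id x).sub_const 1).const_mul p
      exact (h1.sub_const 1).sub h2
    have hφderiv : ∀ x : ℝ, 1/2 ≤ x → HasDerivAt (fun x : ℝ => x ^ (p-1))
        ((p-1)*x^(p-2)) x := by
      intro x hx
      have h1 : HasDerivAt (fun x : ℝ => x ^ (p-1)) ((p-1)*x^(p-1-1)) x :=
        Real.hasDerivAt_rpow_const (Or.inl (by linarith))
      rwa [show p-1-1 = p-2 by ring] at h1
    rcases lt_trichotomy u 1 with hlt | heq | hgt
    · -- u < 1
      obtain ⟨ξ, hξ, hsl⟩ := exists_hasDerivAt_eq_slope (fun x : ℝ => x ^ p - 1 - p*(x-1))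
        (fun x => p*x^(p-1) - p) hlt
        (fun x hx => (hgderiv x (le_trans hul hx.1)).continuousAt.continuousWithinAt)
        (fun x hx => hgderiv x (le_trans hul hx.1.le))
      have hne : (1:ℝ) - u ≠ 0 := by intro hc; linarith [sub_eq_zero.mp hc]
      rw [eq_div_iff hne] at hsl
      simp only [Real.one_rpow] at hsl
      -- hsl : (p*ξ^(p-1) - p) * (1 - u) = (1 - 1 - p*(1-1)) - (u^p - 1 - p*(u-1))
      obtain ⟨ξ₂, hξ₂, hsl2⟩ := exists_hasDerivAt_eq_slope (fun x : ℝ => x ^ (p-1))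
        (fun x => (p-1)*x^(p-2)) hξ.2
        (fun x hx => (hφderiv x (le_trans hul (le_trans hξ.1.le hx.1))).continuousAt.continuousWithinAt)
        (fun x hx => hφderiv x (le_trans hul (le_trans hξ.1.le hx.1.le)))
      have hne2 : (1:ℝ) - ξ ≠ 0 := by intro hc; linarith [sub_eq_zero.mp hc, hξ.2]
      rw [eq_div_iff hne2] at hsl2
      simp only [Real.one_rpow] at hsl2
      -- hsl2 : (p-1)*ξ₂^(p-2) * (1 - ξ) = 1 - ξ^(p-1)
      have hw0 : 0 < ξ₂^(p-2) := Real.rpow_pos_of_pos (by linarith [hξ₂.1, hξ.1] : (0:ℝ) < ξ₂) _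
      have hwKb : ξ₂^(p-2) ≤ Kb := pow_bound (by linarith [hξ₂.1, hξ.1]) (by linarith [hξ₂.2]) _
      have hA : 0 ≤ 1 - u := by linarith
      have hc1 : 0 ≤ 1 - ξ := by linarith [hξ.2]
      have hcA : 1 - ξ ≤ 1 - u := by linarith [hξ.1]
      -- u^p - 1 - p(u-1) = (1-u)*p*(1 - ξ^(p-1)) = (1-u)*(1-ξ)*(p*(p-1)*ξ₂^(p-2))
      have hx : 1 - ξ^(p-1) = (p-1)*ξ₂^(p-2)*(1-ξ) := by linarith
      have hpp : (0:ℝ) ≤ p*(p-1) := by nlinarith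
      have hval : u ^ p - 1 - p*(u-1) = (1-u)*(1-ξ)*(p*(p-1)*ξ₂^(p-2)) := by
        linear_combination hsl + p*(1-u)*hx
      have hP0 : (0:ℝ) ≤ p*(p-1)*ξ₂^(p-2) := mul_nonneg hpp hw0.le
      rw [hval, abs_of_nonneg (mul_nonneg (mul_nonneg hA hc1) hP0)]
      have h1 : (1-ξ)*(ξ₂^(p-2)) ≤ (1-u)*Kb := mul_le_mul hcA hwKb hw0.le hA
      have h2 : (1-u)*((1-ξ)*(ξ₂^(p-2))) ≤ (1-u)*((1-u)*Kb) :=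
        mul_le_mul_of_nonneg_left h1 hA
      calc (1-u)*(1-ξ)*(p*(p-1)*ξ₂^(p-2))
          = (p*(p-1)) * ((1-u)*((1-ξ)*(ξ₂^(p-2)))) := by ring
        _ ≤ (p*(p-1)) * ((1-u)*((1-u)*Kb)) := mul_le_mul_of_nonneg_left h2 hpp
        _ = (p*(p-1)*Kb)*(u-1)^2 := by ring
    · simp [heq]
    · -- 1 < u
      obtain ⟨ξ, hξ, hsl⟩ := exists_hasDerivAt_eq_slope (fun x : ℝ => x ^ p - 1 - p*(x-1))
        (fun x => p*x^(p-1) - p) hgt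
        (fun x hx => (hgderiv x (by linarith [hx.1] : (1/2:ℝ) ≤ x)).continuousAt.continuousWithinAt)
        (fun x hx => hgderiv x (by linarith [hx.1.le] : (1/2:ℝ) ≤ x))
      have hne : u - 1 ≠ 0 := by intro hc; linarith [sub_eq_zero.mp hc]
      rw [eq_div_iff hne] at hsl
      simp only [Real.one_rpow] at hsl
      obtain ⟨ξ₂, hξ₂, hsl2⟩ := exists_hasDerivAt_eq_slope (fun x : ℝ => x ^ (p-1))
        (fun x => (p-1)*x^(p-2)) hξ.1
        (fun x hx => (hφderiv x (by linarith [hx.1] : (1/2:ℝ) ≤ x)).continuousAt.continuousWithinAt)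
        (fun x hx => hφderiv x (by linarith [hx.1.le] : (1/2:ℝ) ≤ x))
      have hne2 : ξ - 1 ≠ 0 := by intro hc; linarith [sub_eq_zero.mp hc, hξ.1]
      rw [eq_div_iff hne2] at hsl2
      simp only [Real.one_rpow] at hsl2
      have hw0 : 0 < ξ₂^(p-2) := Real.rpow_pos_of_pos (by linarith [hξ₂.1] : (0:ℝ) < ξ₂) _
      have hwKb : ξ₂^(p-2) ≤ Kb := pow_bound (by linarith [hξ₂.1]) (by linarith [hξ₂.2, hξ.2]) _
      have hA : 0 ≤ u - 1 := by linarith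
      have hc1 : 0 ≤ ξ - 1 := by linarith [hξ.1]
      have hcA : ξ - 1 ≤ u - 1 := by linarith [hξ.2]
      have hx : ξ^(p-1) - 1 = (p-1)*ξ₂^(p-2)*(ξ-1) := by linarith
      have hpp : (0:ℝ) ≤ p*(p-1) := by nlinarith
      have hval : u ^ p - 1 - p*(u-1) = (u-1)*(ξ-1)*(p*(p-1)*ξ₂^(p-2)) := by
        linear_combination (-1:ℝ)*hsl + p*(u-1)*hx
      have hP0 : (0:ℝ) ≤ p*(p-1)*ξ₂^(p-2) := mul_nonneg hpp hw0.le
      rw [hval, abs_of_nonneg (mul_nonneg (mul_nonneg hA hc1) hP0)]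
      have h1 : (ξ-1)*(ξ₂^(p-2)) ≤ (u-1)*Kb := mul_le_mul hcA hwKb hw0.le hA
      have h2 : (u-1)*((ξ-1)*(ξ₂^(p-2))) ≤ (u-1)*((u-1)*Kb) :=
        mul_le_mul_of_nonneg_left h1 hA
      calc (u-1)*(ξ-1)*(p*(p-1)*ξ₂^(p-2))
          = (p*(p-1)) * ((u-1)*((ξ-1)*(ξ₂^(p-2)))) := by ring
        _ ≤ (p*(p-1)) * ((u-1)*((u-1)*Kb)) := mul_le_mul_of_nonneg_left h2 hpp
        _ = (p*(p-1)*Kb)*(u-1)^2 := by ring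
  have hid : u ^ p - u - (p-1)*(u-1) = u ^ p - 1 - p*(u-1) := by ring
  rw [hid]
  exact hgoal

/-- the singular solution satisfies `y(t) = 1 + O(e^{2mt})` as `t → -∞`. -/
theorem singular_solution_rate (N : ℕ) (hN : 3 ≤ N) (p : ℝ) (hp : 1 < p)
    (hpS : pSob N < p)
    (T : ℝ) (y y' y'' : ℝ → ℝ) (hy : IsSingODEOn N p T y y' y'') :
    ∃ C > (0:ℝ), ∃ T' ≤ T, ∀ t ≤ T',
      |y t - 1| ≤ C * Real.exp (2 * mConst N p * t) := by
  obtain ⟨hy1, hy2, hy3, hy4, hy5⟩ := hy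
  have hN3 : (3:ℝ) ≤ (N:ℝ) := by exact_mod_cast hN
  have hN2 : (0:ℝ) < (N:ℝ) - 2 := by linarith
  have hq : 0 < p - 1 := by linarith
  have hθpos : 0 < thetaP p := by unfold thetaP; positivity
  have hθlt : thetaP p < ((N:ℝ)-2)/2 := by
    unfold thetaP
    rw [div_lt_div_iff₀ hq (by norm_num)]
    unfold pSob at hpS
    rw [div_lt_iff₀ hN2] at hpS
    nlinarith
  have hc : 0 < thetaP p * ((N:ℝ) - 2 - thetaP p) :=
    mul_pos hθpos (by linarith)
  have hm : 0 < mConst N p := Real.rpow_pos_of_pos hc _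
  have ha : 0 < alphaConst N p := by
    unfold alphaConst
    exact mul_pos hm (by linarith)
  have hz0 : Tendsto (fun t => y t - 1) atBot (𝓝 0) := by
    simpa using hy5.sub_const 1
  obtain ⟨T₀, hT₀⟩ := eventually_atBot.mp (Metric.tendsto_nhds.mp hz0 (1/2) (by norm_num))
  have hT₂T : min T₀ (T-1) ≤ T := le_trans (min_le_right _ _) (by linarith)
  have hlt : ∀ t ≤ min T₀ (T-1), t < T := fun t ht =>
    lt_of_le_of_lt (le_trans ht (min_le_right _ _)) (by linarith)
  have hhalf : ∀ t ≤ min T₀ (T-1), |y t - 1| ≤ 1/2 := by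
    intro t ht
    have h := hT₀ t (le_trans ht (min_le_left _ _))
    rw [Real.dist_eq, sub_zero] at h
    exact h.le
  have hK : 0 < p*(p-1)*((3/2:ℝ)^(p-2) + (1/2:ℝ)^(p-2)) := by
    have h1 := Real.rpow_pos_of_pos (show (0:ℝ) < 3/2 by norm_num) (p-2)
    have h2 := Real.rpow_pos_of_pos (show (0:ℝ) < 1/2 by norm_num) (p-2)
    have h3 : 0 < p*(p-1) := by nlinarith
    nlinarith
  obtain ⟨C, hC, T', hT', hbound⟩ := key_lemma (alphaConst N p) (p-1)
    (p*(p-1)*((3/2:ℝ)^(p-2) + (1/2:ℝ)^(p-2))) (mConst N p) (2*(mConst N p)^2)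
    (min T₀ (T-1)) ha hq hK hm
    (fun t => y t - 1) y' y''
    (fun t => y t ^ p - y t - (p-1)*(y t - 1))
    (fun t => (mConst N p)^2 * Real.exp (2*(mConst N p)*t) * y t)
    (fun t ht => ((hy1 t (hlt t ht).le).hasDerivAt (Iic_mem_nhds (hlt t ht))).sub_const 1)
    (fun t ht => (hy2 t (hlt t ht).le).hasDerivAt (Iic_mem_nhds (hlt t ht)))
    (fun t ht => by
      have h4 := hy4 t (hlt t ht).le
      have hmm : 2 * mConst N p * t = 2*(mConst N p)*t := by ring
      rw [hmm] at h4
      linarith [h4])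
    (fun t ht => rpow_taylor p hp (y t) (hhalf t ht))
    (fun t ht => by
      have h1 := hhalf t ht
      have h2 : |y t| ≤ 2 := by
        obtain ⟨ha1, ha2⟩ := abs_le.mp h1
        rw [abs_le]; constructor <;> linarith
      calc |(mConst N p)^2 * Real.exp (2*(mConst N p)*t) * y t|
          = (mConst N p)^2 * Real.exp (2*(mConst N p)*t) * |y t| := by
            rw [abs_mul, abs_of_nonneg (by positivity)]
        _ ≤ (mConst N p)^2 * Real.exp (2*(mConst N p)*t) * 2 :=
            mul_le_mul_of_nonneg_left h2 (by positivity)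
        _ = 2*(mConst N p)^2 * Real.exp (2*(mConst N p)*t) := by ring)
    hz0
  refine ⟨C, hC, T', le_trans hT' hT₂T, ?_⟩
  intro t ht
  have h := hbound t ht
  simpa [show 2*(mConst N p)*t = 2 * mConst N p * t from by ring] using h
end
end

section
/- Suppose p > p_S. Let ν := min{p−1, 1}. Then there exist constants C > 0 and T ∈ ℝ such that |(y*)'(t) − (m/(2(N−1)−3θ)) e^{2mt}| ≤ C e^{2m(1+ν)t} for all t ≤ T; that is, (y*)'(t) = (m/(2(N−1)−3θ)) e^{2mt} + O(e^{2m(1+ν)t}) as t → −∞. -/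
open Real Set Filter Topology MeasureTheory

noncomputable section

/-- Roots of `X² + αX + q` with negative real parts. -/
lemma exists_roots (a q : ℝ) (ha : 0 < a) (hq : 0 < q) :
    ∃ l1 l2 : ℂ, l1 + l2 = -(a : ℂ) ∧ l1 * l2 = (q : ℂ) ∧ l1.re < 0 ∧ l2.re < 0 := by
  rcases le_or_gt (a ^ 2 - 4 * q) 0 with hD | hD
  · -- complex roots
    set s : ℝ := Real.sqrt (4 * q - a ^ 2) with hs
    have hs2 : s ^ 2 = 4 * q - a ^ 2 := Real.sq_sqrt (by linarith)
    refine ⟨Complex.mk (-a / 2) (s / 2), Complex.mk (-a / 2) (-s / 2), ?_, ?_, ?_, ?_⟩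
    · apply Complex.ext <;> simp <;> ring
    · apply Complex.ext <;> simp [Complex.mul_re, Complex.mul_im] <;> nlinarith
    · simpa using by linarith
    · simpa using by linarith
  · -- real roots
    set s : ℝ := Real.sqrt (a ^ 2 - 4 * q) with hs
    have hs2 : s ^ 2 = a ^ 2 - 4 * q := Real.sq_sqrt (by linarith)
    have hsa : s < a := by
      nlinarith [Real.sqrt_nonneg (a ^ 2 - 4 * q)]
    have hsn : 0 ≤ s := Real.sqrt_nonneg _
    refine ⟨((- a + s) / 2 : ℝ), ((- a - s) / 2 : ℝ), ?_, ?_, ?_, ?_⟩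
    · rw [← Complex.ofReal_add, ← Complex.ofReal_neg]; norm_cast; ring
    · rw [← Complex.ofReal_mul]; norm_cast; nlinarith
    · simpa using by linarith
    · simpa using by linarith

/-- MVT helper on `[1/2, 3/2]` anchored at `1`. -/
lemma mvt_anchor (f f' : ℝ → ℝ)
    (hd : ∀ x ∈ Icc (1/2 : ℝ) (3/2), HasDerivAt f (f' x) x)
    (u : ℝ) (hu : u ∈ Icc (1/2 : ℝ) (3/2)) :
    ∃ ξ ∈ Icc (1/2 : ℝ) (3/2), |ξ - 1| ≤ |u - 1| ∧ f u - f 1 = f' ξ * (u - 1) := by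
  have h1 : (1:ℝ) ∈ Icc (1/2 : ℝ) (3/2) := by norm_num
  rcases lt_trichotomy u 1 with h | h | h
  · have hsub : Icc u 1 ⊆ Icc (1/2 : ℝ) (3/2) := Icc_subset_Icc hu.1 h1.2
    have hcont : ContinuousOn f (Icc u 1) :=
      fun x hx => ((hd x (hsub hx)).continuousAt).continuousWithinAt
    obtain ⟨ξ, hξ, hslope⟩ := exists_hasDerivAt_eq_slope f f' h hcont
      (fun x hx => hd x (hsub ⟨hx.1.le, hx.2.le⟩))
    refine ⟨ξ, hsub ⟨hξ.1.le, hξ.2.le⟩, ?_, ?_⟩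
    · rw [abs_sub_comm ξ 1, abs_of_nonneg (by linarith [hξ.2] : (0:ℝ) ≤ 1 - ξ),
        abs_sub_comm u 1, abs_of_nonneg (by linarith : (0:ℝ) ≤ 1 - u)]
      linarith [hξ.1]
    · have hne : (1:ℝ) - u ≠ 0 := by linarith
      field_simp at hslope
      linarith [hslope]
  · exact ⟨1, h1, by simp [h], by simp [h]⟩
  · have hsub : Icc (1:ℝ) u ⊆ Icc (1/2 : ℝ) (3/2) := Icc_subset_Icc h1.1 hu.2
    have hcont : ContinuousOn f (Icc 1 u) :=
      fun x hx => ((hd x (hsub hx)).continuousAt).continuousWithinAt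
    obtain ⟨ξ, hξ, hslope⟩ := exists_hasDerivAt_eq_slope f f' h hcont
      (fun x hx => hd x (hsub ⟨hx.1.le, hx.2.le⟩))
    refine ⟨ξ, hsub ⟨hξ.1.le, hξ.2.le⟩, ?_, ?_⟩
    · rw [abs_of_nonneg (by linarith [hξ.1] : (0:ℝ) ≤ ξ - 1),
        abs_of_nonneg (by linarith : (0:ℝ) ≤ u - 1)]
      linarith [hξ.2]
    · have hne : u - (1:ℝ) ≠ 0 := by linarith
      field_simp at hslope
      linarith [hslope]

/-- Quadratic Taylor bound for `u ^ p` at `u = 1`. -/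
lemma rpow_taylor_bound (p : ℝ) (hp : 1 < p) :
    ∃ CR : ℝ, 0 ≤ CR ∧ ∀ u : ℝ, |u - 1| ≤ 1/2 →
      |u ^ p - 1 - p * (u - 1)| ≤ CR * (u - 1) ^ 2 := by
  obtain ⟨B, hB⟩ : ∃ B : ℝ, B = (3/2 : ℝ) ^ (p - 2) + (1/2 : ℝ) ^ (p - 2) := ⟨_, rfl⟩
  have hBnn : 0 ≤ B := by rw [hB]; positivity
  obtain ⟨CA, hCA⟩ : ∃ CA : ℝ, CA = (p - 1) * B := ⟨_, rfl⟩
  have hCAnn : 0 ≤ CA := by rw [hCA]; exact mul_nonneg (by linarith) hBnn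
  refine ⟨p * CA, mul_nonneg (by linarith) hCAnn, ?_⟩
  intro u hu
  have huIcc : u ∈ Icc (1/2 : ℝ) (3/2) := by
    constructor <;> [skip; skip] <;> cases' abs_le.1 hu with h1 h2 <;> linarith
  -- bound on x ^ (p-2) on the interval
  have hpow : ∀ x ∈ Icc (1/2 : ℝ) (3/2), x ^ (p - 2) ≤ B := by
    intro x hx
    rcases le_or_gt 2 p with h2 | h2
    · have : x ^ (p - 2) ≤ (3/2 : ℝ) ^ (p - 2) :=
        Real.rpow_le_rpow (by linarith [hx.1]) hx.2 (by linarith)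
      have h0 : (0:ℝ) ≤ (1/2 : ℝ) ^ (p - 2) := Real.rpow_nonneg (by norm_num) _
      rw [hB]; linarith
    · have : x ^ (p - 2) ≤ (1/2 : ℝ) ^ (p - 2) :=
        Real.rpow_le_rpow_of_nonpos (by norm_num) hx.1 (by linarith)
      have h0 : (0:ℝ) ≤ (3/2 : ℝ) ^ (p - 2) := Real.rpow_nonneg (by norm_num) _
      rw [hB]; linarith
  -- Claim A
  have claimA : ∀ x ∈ Icc (1/2 : ℝ) (3/2), |x ^ (p - 1) - 1| ≤ CA * |x - 1| := by
    intro x hx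
    obtain ⟨ξ, hξ, hξd, heq⟩ := mvt_anchor (fun y => y ^ (p - 1))
      (fun y => (p - 1) * y ^ (p - 1 - 1))
      (fun y hy => Real.hasDerivAt_rpow_const (Or.inl (by linarith [hy.1]))) x hx
    rw [Real.one_rpow] at heq
    rw [heq, abs_mul]
    have hd : |(p - 1) * ξ ^ (p - 1 - 1)| ≤ CA := by
      rw [abs_mul, abs_of_nonneg (by linarith : (0:ℝ) ≤ p - 1),
        abs_of_nonneg (Real.rpow_nonneg (by linarith [hξ.1]) _)]
      have := hpow ξ hξ
      have hxx : ξ ^ (p - 1 - 1) = ξ ^ (p - 2) := by rw [show p - 1 - 1 = p - 2 by ring]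
      rw [hxx, hCA]
      exact mul_le_mul_of_nonneg_left this (by linarith)
    exact mul_le_mul_of_nonneg_right hd (abs_nonneg _)
  -- Claim B
  obtain ⟨ξ, hξ, hξd, heq⟩ := mvt_anchor (fun y => y ^ p - 1 - p * (y - 1))
    (fun y => p * y ^ (p - 1) - p)
    (fun y hy => by
      have h1 : HasDerivAt (fun z : ℝ => z ^ p) (p * y ^ (p - 1)) y :=
        Real.hasDerivAt_rpow_const (Or.inl (by linarith [hy.1]))
      have h2 : HasDerivAt (fun z : ℝ => p * (z - 1)) p y := by
        simpa using ((hasDerivAt_id y).sub_const 1).const_mul p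
      exact (h1.sub_const 1).sub h2) u huIcc
  have hval1 : (1:ℝ) ^ p - 1 - p * ((1:ℝ) - 1) = 0 := by simp [Real.one_rpow]
  rw [hval1, sub_zero] at heq
  rw [heq, abs_mul]
  have hfac : |p * ξ ^ (p - 1) - p| = p * |ξ ^ (p - 1) - 1| := by
    rw [show p * ξ ^ (p - 1) - p = p * (ξ ^ (p - 1) - 1) by ring, abs_mul,
      abs_of_nonneg (by linarith : (0:ℝ) ≤ p)]
  rw [hfac]
  calc p * |ξ ^ (p - 1) - 1| * |u - 1| ≤ p * (CA * |ξ - 1|) * |u - 1| := by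
        apply mul_le_mul_of_nonneg_right _ (abs_nonneg _)
        exact mul_le_mul_of_nonneg_left (claimA ξ hξ) (by linarith)
    _ ≤ p * (CA * |u - 1|) * |u - 1| := by
        apply mul_le_mul_of_nonneg_right _ (abs_nonneg _)
        exact mul_le_mul_of_nonneg_left (mul_le_mul_of_nonneg_left hξd hCAnn) (by linarith)
    _ = p * CA * (u - 1) ^ 2 := by
        rw [← sq_abs (u - 1)]; ring

/-- Core ODE decay bound via integrating factor. -/
lemma core_bound (lam : ℂ) (hlam : lam.re < 0) (f g : ℝ → ℂ) (T : ℝ)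
    (hf : ∀ t ≤ T, HasDerivAt f (lam * f t + g t) t)
    (hg : ContinuousOn g (Iic T))
    (K B M beta : ℝ) (hbeta : 0 < beta) (hK : 0 ≤ K) (hB : 0 ≤ B) (hM : 0 ≤ M)
    (hgb : ∀ t ≤ T, ‖g t‖ ≤ K * Real.exp (beta * t) + B)
    (hfM : ∀ s ≤ T, ∃ s' ≤ s, ‖f s'‖ ≤ M) :
    ∀ t ≤ T, ‖f t‖ ≤ K / (beta - lam.re) * Real.exp (beta * t) + B / (-lam.re) := by
  intro t ht
  set b1 : ℝ := beta - lam.re with hb1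
  set b2 : ℝ := -lam.re with hb2
  have hb1pos : 0 < b1 := by simp only [hb1]; linarith
  have hb2pos : 0 < b2 := by simp only [hb2]; linarith
  set F : ℝ → ℂ := fun s => Complex.exp (-lam * (s : ℂ)) * f s with hF
  have hFnorm : ∀ s : ℝ, ‖F s‖ = Real.exp (-lam.re * s) * ‖f s‖ := by
    intro s
    simp [hF, Complex.norm_exp, Complex.mul_re, map_mul]
  have hFd : ∀ s ≤ T, HasDerivAt F (Complex.exp (-lam * (s : ℂ)) * g s) s := by
    intro s hs
    have h1 : HasDerivAt (fun u : ℝ => -lam * (u : ℂ)) (-lam) s := by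
      simpa using ((hasDerivAt_id s).ofReal_comp.const_mul (-lam))
    have h2 : HasDerivAt (fun u : ℝ => Complex.exp (-lam * (u : ℂ)))
        (Complex.exp (-lam * (s : ℂ)) * (-lam)) s := h1.cexp
    have h3 := h2.mul (hf s hs)
    refine h3.congr_deriv ?_
    ring
  have hccoe : Continuous (fun τ : ℝ => Complex.exp (-lam * (τ : ℂ))) :=
    Complex.continuous_exp.comp (continuous_const.mul Complex.continuous_ofReal)
  have key : ∀ s ≤ t, ‖f t‖ ≤ ‖f s‖ * Real.exp (lam.re * (t - s))
      + (K / b1 * Real.exp (beta * t) + B / b2) := by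
    intro s hs
    have hsT : s ≤ T := le_trans hs ht
    have hsub : uIcc s t ⊆ Iic T := by
      rw [uIcc_of_le hs]; exact fun x hx => le_trans hx.2 ht
    have hE : ContinuousOn (fun τ : ℝ => Complex.exp (-lam * (τ : ℂ)) * g τ) (uIcc s t) :=
      ContinuousOn.mul hccoe.continuousOn (hg.mono hsub)
    have hInt : IntervalIntegrable (fun τ : ℝ => Complex.exp (-lam * (τ : ℂ)) * g τ)
        volume s t := hE.intervalIntegrable
    have hFTC : ∫ τ in s..t, Complex.exp (-lam * (τ : ℂ)) * g τ = F t - F s :=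
      intervalIntegral.integral_eq_sub_of_hasDerivAt (fun τ hτ => hFd τ (hsub hτ)) hInt
    have hnormint : ‖F t - F s‖ ≤ ∫ τ in s..t, ‖Complex.exp (-lam * (τ : ℂ)) * g τ‖ := by
      rw [← hFTC]; exact intervalIntegral.norm_integral_le_integral_norm hs
    set φ : ℝ → ℝ := fun τ => K * Real.exp (b1 * τ) + B * Real.exp (b2 * τ) with hφ
    have hφcont : Continuous φ := by
      apply Continuous.add
      · exact continuous_const.mul (Real.continuous_exp.comp (continuous_const.mul continuous_id))
      · exact continuous_const.mul (Real.continuous_exp.comp (continuous_const.mul continuous_id))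
    have hφint : ∫ τ in s..t, ‖Complex.exp (-lam * (τ : ℂ)) * g τ‖ ≤ ∫ τ in s..t, φ τ := by
      apply intervalIntegral.integral_mono_on hs
      · exact (hE.norm).intervalIntegrable
      · exact hφcont.continuousOn.intervalIntegrable
      · intro x hx
        have hxT : x ≤ T := le_trans hx.2 ht
        have hnx : ‖Complex.exp (-lam * (x : ℂ)) * g x‖ = Real.exp (-lam.re * x) * ‖g x‖ := by
          simp [Complex.norm_exp, Complex.mul_re, map_mul]
        rw [hnx]
        have hgx := hgb x hxT
        have he : (0:ℝ) < Real.exp (-lam.re * x) := Real.exp_pos _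
        calc Real.exp (-lam.re * x) * ‖g x‖
            ≤ Real.exp (-lam.re * x) * (K * Real.exp (beta * x) + B) :=
              mul_le_mul_of_nonneg_left hgx he.le
          _ = φ x := by
              simp only [hφ, hb1, hb2]
              rw [show (beta - lam.re) * x = beta * x + -lam.re * x by ring, Real.exp_add]
              ring
    have hφval : ∫ τ in s..t, φ τ ≤ K / b1 * Real.exp (b1 * t) + B / b2 * Real.exp (b2 * t) := by
      have hanti : ∀ τ ∈ uIcc s t, HasDerivAt
          (fun τ => K / b1 * Real.exp (b1 * τ) + B / b2 * Real.exp (b2 * τ)) (φ τ) τ := by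
        intro τ _
        have e1 : HasDerivAt (fun τ : ℝ => Real.exp (b1 * τ)) (b1 * Real.exp (b1 * τ)) τ := by
          simpa [mul_comm] using ((hasDerivAt_id τ).const_mul b1).exp
        have e2 : HasDerivAt (fun τ : ℝ => Real.exp (b2 * τ)) (b2 * Real.exp (b2 * τ)) τ := by
          simpa [mul_comm] using ((hasDerivAt_id τ).const_mul b2).exp
        have := (e1.const_mul (K / b1)).add (e2.const_mul (B / b2))
        refine this.congr_deriv ?_
        simp only [hφ]
        field_simp
      have hFTC2 : ∫ τ in s..t, φ τ
          = (K / b1 * Real.exp (b1 * t) + B / b2 * Real.exp (b2 * t))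
            - (K / b1 * Real.exp (b1 * s) + B / b2 * Real.exp (b2 * s)) :=
        intervalIntegral.integral_eq_sub_of_hasDerivAt hanti
          hφcont.continuousOn.intervalIntegrable
      rw [hFTC2]
      have : 0 ≤ K / b1 * Real.exp (b1 * s) + B / b2 * Real.exp (b2 * s) := by positivity
      linarith
    have h1 : ‖F t‖ ≤ ‖F s‖ + (K / b1 * Real.exp (b1 * t) + B / b2 * Real.exp (b2 * t)) := by
      have h0 := norm_sub_norm_le (F t) (F s)
      linarith [le_trans (le_trans hnormint hφint) hφval]
    rw [hFnorm t, hFnorm s] at h1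
    have hexp : (0:ℝ) < Real.exp (lam.re * t) := Real.exp_pos _
    have h4 := mul_le_mul_of_nonneg_left h1 hexp.le
    rw [mul_add, mul_add] at h4
    have id0 : Real.exp (lam.re * t) * (Real.exp (-lam.re * t) * ‖f t‖) = ‖f t‖ := by
      rw [← mul_assoc, ← Real.exp_add, show lam.re * t + -lam.re * t = 0 by ring,
        Real.exp_zero, one_mul]
    have id1 : Real.exp (lam.re * t) * (Real.exp (-lam.re * s) * ‖f s‖)
        = ‖f s‖ * Real.exp (lam.re * (t - s)) := by
      rw [← mul_assoc, ← Real.exp_add, show lam.re * t + -lam.re * s = lam.re * (t - s) by ring]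
      ring
    have id2 : Real.exp (lam.re * t) * (K / b1 * Real.exp (b1 * t))
        = K / b1 * Real.exp (beta * t) := by
      rw [mul_comm (K / b1) (Real.exp (b1 * t)), ← mul_assoc, ← Real.exp_add,
        show lam.re * t + b1 * t = beta * t by rw [hb1]; ring]
      ring
    have id3 : Real.exp (lam.re * t) * (B / b2 * Real.exp (b2 * t)) = B / b2 := by
      rw [mul_comm (B / b2) (Real.exp (b2 * t)), ← mul_assoc, ← Real.exp_add,
        show lam.re * t + b2 * t = 0 by rw [hb2]; ring, Real.exp_zero, one_mul]
    rw [id0, id1, id2, id3] at h4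
    linarith
  -- pass to the limit s → -∞
  have hlim : Tendsto (fun s => M * Real.exp (lam.re * (t - s))
      + (K / b1 * Real.exp (beta * t) + B / b2)) atBot
      (𝓝 (M * 0 + (K / b1 * Real.exp (beta * t) + B / b2))) := by
    apply Tendsto.add _ tendsto_const_nhds
    apply Tendsto.const_mul
    apply Real.tendsto_exp_atBot.comp
    have : Tendsto (fun s : ℝ => -lam.re * s + lam.re * t) atBot atBot := by
      apply tendsto_atBot_add_const_right
      exact (tendsto_id.const_mul_atBot hb2pos)
    exact this.congr (fun s => by ring)
  have hev : ∀ᶠ s in (atBot : Filter ℝ), ‖f t‖ ≤ M * Real.exp (lam.re * (t - s))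
      + (K / b1 * Real.exp (beta * t) + B / b2) := by
    rw [eventually_atBot]
    refine ⟨t, fun s hs => ?_⟩
    obtain ⟨s', hs', hfs'⟩ := hfM s (le_trans hs ht)
    have := key s' (le_trans hs' hs)
    have hmono : Real.exp (lam.re * (t - s')) ≤ Real.exp (lam.re * (t - s)) := by
      apply Real.exp_le_exp.2
      nlinarith [hs', hlam]
    calc ‖f t‖ ≤ ‖f s'‖ * Real.exp (lam.re * (t - s'))
          + (K / b1 * Real.exp (beta * t) + B / b2) := this
      _ ≤ M * Real.exp (lam.re * (t - s)) + (K / b1 * Real.exp (beta * t) + B / b2) := by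
          have h5 : ‖f s'‖ * Real.exp (lam.re * (t - s'))
              ≤ M * Real.exp (lam.re * (t - s)) := by
            apply mul_le_mul hfs' hmono (Real.exp_pos _).le hM
          linarith
  have := ge_of_tendsto hlim hev
  simpa using this

set_option maxHeartbeats 2000000 in
/-- asymptotics of `(y*)'` as `t → -∞`:
`(y*)'(t) = (m/(2(N-1)-3θ)) e^{2mt} + O(e^{2m(1+ν)t})` with `ν = min{p-1,1}`. -/
theorem ystar_deriv_asymptotics (N : ℕ) (hN : 3 ≤ N) (p : ℝ) (hp : 1 < p)
    (hpS : pSob N < p)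
    (ys ys' ys'' : ℝ → ℝ) (hys : IsEntireSingODE N p ys ys' ys'') :
    ∃ C > (0:ℝ), ∃ T : ℝ, ∀ t ≤ T,
      |ys' t - mConst N p / (2 * ((N : ℝ) - 1) - 3 * thetaP p)
          * Real.exp (2 * mConst N p * t)|
        ≤ C * Real.exp (2 * mConst N p * (1 + min (p - 1) 1) * t) := by
  obtain ⟨hysd, hysd', hys''cont, hODE, htend⟩ := hys
  -- basic constants
  obtain ⟨θ, hθdef⟩ : ∃ x : ℝ, x = thetaP p := ⟨_, rfl⟩
  obtain ⟨m, hmdef⟩ : ∃ x : ℝ, x = mConst N p := ⟨_, rfl⟩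
  obtain ⟨a, hadef⟩ : ∃ x : ℝ, x = alphaConst N p := ⟨_, rfl⟩
  obtain ⟨q, hqdef⟩ : ∃ x : ℝ, x = p - 1 := ⟨_, rfl⟩
  have hq : 0 < q := by simp only [hqdef]; linarith
  have hN3 : (3:ℝ) ≤ (N:ℝ) := by exact_mod_cast hN
  have hN2 : (0:ℝ) < (N:ℝ) - 2 := by linarith
  have hθpos : 0 < θ := by
    rw [hθdef]
    simp only [thetaP]
    apply div_pos (by norm_num) (by linarith)
  have hfrac : ((N:ℝ)+2)/((N:ℝ)-2) = 1 + 4/((N:ℝ)-2) := by field_simp; ring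
  have hp4 : 4/((N:ℝ)-2) < p - 1 := by
    have := hpS
    simp only [pSob] at this
    rw [hfrac] at this
    linarith
  have h4pos : (0:ℝ) < 4/((N:ℝ)-2) := by positivity
  have hθlt : θ < ((N:ℝ)-2)/2 := by
    have h1 : θ < 2 / (4/((N:ℝ)-2)) := by
      simp only [hθdef, thetaP]
      exact div_lt_div_of_pos_left (by norm_num) h4pos hp4
    have h2 : 2 / ((4:ℝ)/((N:ℝ)-2)) = ((N:ℝ)-2)/2 := by
      field_simp; ring
    linarith
  have hx : (0:ℝ) < θ * ((N:ℝ) - 2 - θ) := by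
    apply mul_pos hθpos; linarith
  have hm : 0 < m := by
    simp only [hmdef, mConst, ← hθdef]
    exact Real.rpow_pos_of_pos hx _
  have hm2 : m ^ 2 * (θ * ((N:ℝ) - 2 - θ)) = 1 := by
    have hmm : m * m = (θ * ((N:ℝ) - 2 - θ)) ^ ((-(1/2) : ℝ) + (-(1/2))) := by
      simp only [hmdef, mConst, ← hθdef]
      exact (Real.rpow_add hx _ _).symm
    have : ((-(1/2) : ℝ) + (-(1/2))) = -1 := by norm_num
    rw [this, Real.rpow_neg_one] at hmm
    rw [sq, hmm]
    exact inv_mul_cancel₀ (ne_of_gt hx)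
  have haid : a = m * ((N:ℝ) - 2 - 2*θ) := by
    simp only [hadef, alphaConst, ← hθdef, ← hmdef]
  have ha : 0 < a := by
    rw [haid]; apply mul_pos hm; linarith
  have hqθ : q * θ = 2 := by
    rw [hθdef, hqdef]
    simp only [thetaP]
    have hpne : p - 1 ≠ 0 := by linarith
    field_simp
  have hqm : 2 * m^2 * ((N:ℝ) - 2 - θ) = q := by
    have h1 : (2 * m^2 * ((N:ℝ) - 2 - θ)) * θ = q * θ := by
      rw [hqθ]; linear_combination 2*hm2
    exact mul_right_cancel₀ (ne_of_gt hθpos) h1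
  obtain ⟨E, hEdef⟩ : ∃ x : ℝ, x = 2*((N:ℝ)-1) - 3*θ := ⟨_, rfl⟩
  have hE : 0 < E := by simp only [hEdef]; linarith
  obtain ⟨Dq, hDqdef⟩ : ∃ x : ℝ, x = (2*m)^2 + a*(2*m) + q := ⟨_, rfl⟩
  have hDq : 0 < Dq := by simp only [hDqdef]; positivity
  have hDqE : Dq = 2*m^2*E := by
    simp only [hDqdef, hEdef, haid]
    linear_combination -hqm
  obtain ⟨c, hcdef⟩ : ∃ x : ℝ, x = m^2 / Dq := ⟨_, rfl⟩
  have hc : 0 < c := by rw [hcdef]; positivity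
  have hcid : c * Dq = m^2 := by
    rw [hcdef]; field_simp
  have hcoeff : 2*m*c = m / E := by
    simp only [hcdef]
    rw [hDqE]
    field_simp
  -- roots
  obtain ⟨l1, l2, hsum, hprod, hl1re, hl2re⟩ := exists_roots a q ha hq
  obtain ⟨a1, ha1def⟩ : ∃ x : ℝ, x = -l1.re := ⟨_, rfl⟩
  obtain ⟨a2, ha2def⟩ : ∃ x : ℝ, x = -l2.re := ⟨_, rfl⟩
  have ha1 : 0 < a1 := by simp only [ha1def]; linarith
  have ha2 : 0 < a2 := by simp only [ha2def]; linarith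
  -- Taylor bound
  obtain ⟨CR, hCRnn, hCR⟩ := rpow_taylor_bound p hp
  -- choice of ε and T0
  obtain ⟨D, hDdef⟩ : ∃ x : ℝ, x = CR / (a1 * a2) := ⟨_, rfl⟩
  have hDnn : 0 ≤ D := by rw [hDdef]; positivity
  obtain ⟨ε, hεdef⟩ : ∃ x : ℝ, x = min (1/2) (1/(2*(D+1))) := ⟨_, rfl⟩
  have hεpos : 0 < ε := by
    rw [hεdef]
    apply lt_min (by norm_num)
    exact one_div_pos.mpr (by linarith only [hDnn])
  have hεhalf : ε ≤ 1/2 := by rw [hεdef]; exact min_le_left _ _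
  have hεD : D * ε ≤ 1/2 := by
    have h1 : ε ≤ 1/(2*(D+1)) := by rw [hεdef]; exact min_le_right _ _
    have h2 : D * ε ≤ D * (1/(2*(D+1))) := mul_le_mul_of_nonneg_left h1 hDnn
    have h3 : D * (1/(2*(D+1))) ≤ 1/2 := by
      rw [mul_one_div, div_le_div_iff₀ (by linarith only [hDnn] : (0:ℝ) < 2*(D+1)) (by norm_num : (0:ℝ) < 2)]
      linarith only []
    linarith only [h2, h3]
  obtain ⟨T0', hT0'⟩ := eventually_atBot.mp
    ((Metric.tendsto_nhds.mp htend) ε hεpos)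
  obtain ⟨T0, hT0def⟩ : ∃ x : ℝ, x = min T0' 0 := ⟨_, rfl⟩
  have hT0le0 : T0 ≤ 0 := by rw [hT0def]; exact min_le_right _ _
  have hsmall : ∀ t ≤ T0, |ys t - 1| ≤ ε := by
    intro t ht
    have := hT0' t (le_trans ht (by rw [hT0def]; exact min_le_left _ _))
    rw [Real.dist_eq] at this
    linarith only [this]
  -- continuity of the solution
  have hyscont : Continuous ys := continuous_iff_continuousAt.mpr (fun t => (hysd t).continuousAt)
  have hys'cont : Continuous ys' := continuous_iff_continuousAt.mpr (fun t => (hysd' t).continuousAt)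
  have hne1 : (-l1.re) ≠ 0 := by linarith
  have hne2 : (-l2.re) ≠ 0 := by linarith
  -- the forcing term
  obtain ⟨g1, hg1def⟩ : ∃ g1 : ℝ → ℝ, g1 = fun t => ys'' t + a*ys' t + q*(ys t - 1) := ⟨_, rfl⟩
  have hg1cont : Continuous g1 := by
    rw [hg1def]
    exact (hys''cont.add (continuous_const.mul hys'cont)).add
      (continuous_const.mul (hyscont.sub continuous_const))
  have hODEid : ∀ t, ys'' t = -a*ys' t - q*(ys t - 1) + g1 t := by
    intro t; rw [hg1def]; ring
  have hg1eq : ∀ t, g1 t = m^2*Real.exp (2*m*t)*(ys t) - (ys t ^ p - 1 - p*(ys t - 1)) := by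
    intro t
    have h0 := hODE t
    rw [← hadef, ← hmdef] at h0
    rw [hg1def, hqdef]
    simp only
    linear_combination h0
  -- step 1 : the complex first-order reductions
  obtain ⟨v, hvdef⟩ : ∃ v : ℝ → ℂ, v = fun t => ((ys' t : ℝ) : ℂ) - l2 * (((ys t - 1 : ℝ)) : ℂ) := ⟨_, rfl⟩
  have hvcont : Continuous v := by
    rw [hvdef]
    exact (Complex.continuous_ofReal.comp hys'cont).sub
      (continuous_const.mul (Complex.continuous_ofReal.comp (hyscont.sub continuous_const)))
  have hvd : ∀ t : ℝ, HasDerivAt v (l1 * v t + ((g1 t : ℝ) : ℂ)) t := by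
    intro t
    have h1 : HasDerivAt (fun s : ℝ => ((ys' s : ℝ) : ℂ)) ((ys'' t : ℝ) : ℂ) t :=
      (hysd' t).ofReal_comp
    have h2 : HasDerivAt (fun s : ℝ => ((ys s - 1 : ℝ) : ℂ)) ((ys' t : ℝ) : ℂ) t :=
      ((hysd t).sub_const 1).ofReal_comp
    have h3 := h1.sub (h2.const_mul l2)
    rw [hvdef]
    refine h3.congr_deriv ?_
    have hc : ((ys'' t : ℝ) : ℂ) = -(a:ℂ)*((ys' t : ℝ):ℂ) - (q:ℂ)*(((ys t - 1:ℝ)):ℂ) + ((g1 t:ℝ):ℂ) := by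
      exact_mod_cast congrArg (fun r : ℝ => (r : ℂ)) (hODEid t)
    push_cast at hc ⊢
    linear_combination hc - ((ys' t : ℝ):ℂ)*hsum + (((ys t : ℝ):ℂ) - 1)*hprod
  have hMv : ∀ s ≤ T0, ∃ s' ≤ s, ‖v s'‖ ≤ (2 + ‖l2‖) * ε := by
    intro s hs
    obtain ⟨ξ, hξ, hslope⟩ := exists_hasDerivAt_eq_slope ys ys' (by linarith : s - 1 < s)
      hyscont.continuousOn (fun x _ => hysd x)
    refine ⟨ξ, hξ.2.le, ?_⟩
    have hξT : ξ ≤ T0 := le_trans hξ.2.le hs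
    have h1 : |ys' ξ| ≤ 2*ε := by
      rw [hslope, show s - (s-1) = 1 by ring, div_one,
        show ys s - ys (s-1) = (ys s - 1) - (ys (s-1) - 1) by ring]
      have e1 := hsmall s hs
      have e2 := hsmall (s-1) (by linarith)
      have htri : |(ys s - 1) - (ys (s-1) - 1)| ≤ |ys s - 1| + |ys (s-1) - 1| := by
        rw [sub_eq_add_neg]
        refine (abs_add_le _ _).trans ?_
        rw [abs_neg]
      linarith only [htri, e1, e2]
    have h2 : |ys ξ - 1| ≤ ε := hsmall ξ hξT
    rw [hvdef]
    simp only
    calc ‖((ys' ξ:ℝ):ℂ) - l2*(((ys ξ - 1:ℝ)):ℂ)‖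
        ≤ ‖((ys' ξ:ℝ):ℂ)‖ + ‖l2*(((ys ξ - 1:ℝ)):ℂ)‖ := norm_sub_le _ _
      _ ≤ 2*ε + ‖l2‖*ε := by
          rw [norm_mul, Complex.norm_real, Complex.norm_real, Real.norm_eq_abs, Real.norm_eq_abs]
          have := mul_le_mul_of_nonneg_left h2 (norm_nonneg l2)
          linarith only [this, h1]
      _ = (2 + ‖l2‖)*ε := by ring
  have h2ml1 : (0:ℝ) < 2*m - l1.re := by linarith
  have h2ml2 : (0:ℝ) < 2*m - l2.re := by linarith
  have h4ml1 : (0:ℝ) < 4*m - l1.re := by linarith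
  have h4ml2 : (0:ℝ) < 4*m - l2.re := by linarith
  obtain ⟨C2, hC2def⟩ : ∃ x : ℝ, x = 2*m^2 / (2*m - l1.re) / (2*m - l2.re) := ⟨_, rfl⟩
  have hC2nn : 0 ≤ C2 := by
    rw [hC2def]
    exact div_nonneg (div_nonneg (by positivity) h2ml1.le) h2ml2.le
  have hwdecay : ∀ t ≤ T0, |ys t - 1| ≤ 2*C2 * Real.exp (2*m*t) := by
    intro t ht
    obtain ⟨W, hWdef⟩ : ∃ x : ℝ, x = sSup ((fun τ => |ys τ - 1|) '' Iic t) := ⟨_, rfl⟩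
    have hbdd : BddAbove ((fun τ => |ys τ - 1|) '' Iic t) := by
      refine ⟨ε, ?_⟩
      rintro x ⟨τ, hτ, rfl⟩
      exact hsmall τ (le_trans hτ ht)
    have hmemne : ((fun τ => |ys τ - 1|) '' Iic t).Nonempty := ⟨_, ⟨t, le_refl t, rfl⟩⟩
    have hWle : ∀ τ ≤ t, |ys τ - 1| ≤ W := by
      intro τ hτ
      rw [hWdef]; exact le_csSup hbdd ⟨τ, hτ, rfl⟩
    have hWnn : 0 ≤ W := le_trans (abs_nonneg _) (hWle t le_rfl)
    have hgb : ∀ τ ≤ t, ‖((g1 τ:ℝ):ℂ)‖ ≤ 2*m^2 * Real.exp (2*m*τ) + CR*ε*W := by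
      intro τ hτ
      have hτT : τ ≤ T0 := le_trans hτ ht
      have hw := hsmall τ hτT
      rw [Complex.norm_real, Real.norm_eq_abs, hg1eq τ]
      have hR := hCR (ys τ) (by linarith only [hw, hεhalf])
      have hys_abs : |ys τ| ≤ 1 + ε := by
        have : ys τ = 1 + (ys τ - 1) := by ring
        rw [this]
        refine (abs_add_le _ _).trans ?_
        rw [abs_one]
        linarith only [hw]
      have htri : |m^2*Real.exp (2*m*τ)*(ys τ) - (ys τ ^ p - 1 - p*(ys τ - 1))|
          ≤ |m^2*Real.exp (2*m*τ)*(ys τ)| + |ys τ ^ p - 1 - p*(ys τ - 1)| := by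
        rw [sub_eq_add_neg]
        refine (abs_add_le _ _).trans ?_
        rw [abs_neg]
      have e1 : |m^2*Real.exp (2*m*τ)*(ys τ)| ≤ 2*m^2*Real.exp (2*m*τ) := by
        rw [abs_mul, abs_of_nonneg (by positivity : (0:ℝ) ≤ m^2*Real.exp (2*m*τ))]
        have hstep := mul_le_mul_of_nonneg_left hys_abs
          (by positivity : (0:ℝ) ≤ m^2*Real.exp (2*m*τ))
        have hstep2 : m^2*Real.exp (2*m*τ) * (1+ε) ≤ m^2*Real.exp (2*m*τ) * 2 :=
          mul_le_mul_of_nonneg_left (by linarith only [hεhalf]) (by positivity)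
        linarith only [hstep, hstep2]
      have e2 : |ys τ ^ p - 1 - p*(ys τ - 1)| ≤ CR*ε*W := by
        refine hR.trans ?_
        have : (ys τ - 1)^2 ≤ ε * W := by
          calc (ys τ - 1)^2 = |ys τ - 1| * |ys τ - 1| := by rw [← abs_mul, abs_mul_self]; ring
            _ ≤ ε * W := mul_le_mul hw (hWle τ hτ) (abs_nonneg _) (le_of_lt hεpos)
        calc CR * (ys τ - 1)^2 ≤ CR * (ε * W) := mul_le_mul_of_nonneg_left this hCRnn
          _ = CR*ε*W := by ring
      linarith only [htri, e1, e2]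
    have app1 := core_bound l1 hl1re v (fun τ => ((g1 τ:ℝ):ℂ)) t
      (fun τ _ => hvd τ)
      ((Complex.continuous_ofReal.comp hg1cont).continuousOn)
      (2*m^2) (CR*ε*W) ((2 + ‖l2‖) * ε) (2*m)
      (by linarith only [hm]) (by positivity)
      (mul_nonneg (mul_nonneg hCRnn hεpos.le) hWnn)
      (mul_nonneg (by positivity) hεpos.le)
      hgb
      (fun s hs => hMv s (le_trans hs ht))
    have hfd2 : ∀ τ ≤ t, HasDerivAt (fun s : ℝ => ((ys s - 1:ℝ):ℂ))
        (l2 * ((ys τ - 1:ℝ):ℂ) + v τ) τ := by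
      intro τ _
      have h2 : HasDerivAt (fun s : ℝ => ((ys s - 1 : ℝ) : ℂ)) ((ys' τ : ℝ) : ℂ) τ :=
        ((hysd τ).sub_const 1).ofReal_comp
      convert h2 using 1
      rw [hvdef]
      ring
    have app2 := core_bound l2 hl2re (fun s : ℝ => ((ys s - 1:ℝ):ℂ)) v t
      hfd2 hvcont.continuousOn
      (2*m^2 / (2*m - l1.re)) (CR*ε*W / (-l1.re)) ε (2*m)
      (by linarith only [hm])
      (div_nonneg (by positivity) h2ml1.le)
      (div_nonneg (mul_nonneg (mul_nonneg hCRnn hεpos.le) hWnn)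
        (by linarith only [hl1re] : (0:ℝ) ≤ -l1.re))
      (le_of_lt hεpos)
      app1
      (fun s hs => ⟨s, le_rfl, by rw [Complex.norm_real, Real.norm_eq_abs]; exact hsmall s (le_trans hs ht)⟩)
    have hWb : W ≤ C2*Real.exp (2*m*t) + (1/2)*W := by
      conv_lhs => rw [hWdef]
      apply csSup_le hmemne
      rintro x ⟨τ, hτ, rfl⟩
      simp only
      have h5 := app2 τ hτ
      rw [Complex.norm_real, Real.norm_eq_abs] at h5
      have hexpmono : Real.exp (2*m*τ) ≤ Real.exp (2*m*t) :=
        Real.exp_le_exp.2 (mul_le_mul_of_nonneg_left hτ (by positivity : (0:ℝ) ≤ 2*m))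
      have e1 : 2*m^2 / (2*m - l1.re) / (2*m - l2.re) * Real.exp (2*m*τ)
          ≤ C2 * Real.exp (2*m*t) := by
        rw [hC2def]
        exact mul_le_mul_of_nonneg_left hexpmono
          (div_nonneg (div_nonneg (by positivity) h2ml1.le) h2ml2.le)
      have e2 : CR*ε*W / (-l1.re) / (-l2.re) ≤ (1/2)*W := by
        have heq : CR*ε*W / (-l1.re) / (-l2.re) = (D*ε)*W := by
          rw [div_div, hDdef, ha1def, ha2def]
          ring
        rw [heq]
        exact mul_le_mul_of_nonneg_right hεD hWnn
      linarith only [h5, e1, e2]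
    have hWfinal : W ≤ 2*C2 * Real.exp (2*m*t) := by linarith only [hWb]
    exact le_trans (hWle t le_rfl) hWfinal
  -- step 2 : subtract the explicit model  c e^{2mt}
  obtain ⟨Kh, hKhdef⟩ : ∃ x : ℝ, x = m^2*(2*C2) + CR*(2*C2)^2 := ⟨_, rfl⟩
  have hKhnn : 0 ≤ Kh := by
    rw [hKhdef]
    have h1 : 0 ≤ m^2*(2*C2) := by positivity
    have h2 : 0 ≤ CR*(2*C2)^2 := mul_nonneg hCRnn (sq_nonneg _)
    linarith only [h1, h2]
  obtain ⟨z, hzdef⟩ : ∃ z : ℝ → ℝ, z = fun t => ys t - 1 - c*Real.exp (2*m*t) := ⟨_, rfl⟩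
  obtain ⟨zd, hzddef⟩ : ∃ zd : ℝ → ℝ, zd = fun t => ys' t - 2*m*c*Real.exp (2*m*t) := ⟨_, rfl⟩
  have hexpd : ∀ t : ℝ, HasDerivAt (fun s => Real.exp (2*m*s)) (2*m*Real.exp (2*m*t)) t := by
    intro t
    simpa [mul_comm] using ((hasDerivAt_id t).const_mul (2*m)).exp
  have hzd : ∀ t, HasDerivAt z (zd t) t := by
    intro t
    rw [hzdef, hzddef]
    have h0 := ((hysd t).sub_const 1).sub ((hexpd t).const_mul c)
    refine h0.congr_deriv ?_
    ring
  have hzdd : ∀ t, HasDerivAt zd (ys'' t - 4*m^2*c*Real.exp (2*m*t)) t := by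
    intro t
    rw [hzddef]
    have h0 := (hysd' t).sub ((hexpd t).const_mul (2*m*c))
    refine h0.congr_deriv ?_
    ring
  have hzcont : Continuous z := by
    rw [hzdef]
    exact (hyscont.sub continuous_const).sub
      (continuous_const.mul (Real.continuous_exp.comp (continuous_const.mul continuous_id)))
  have hzdcont : Continuous zd := by
    rw [hzddef]
    exact hys'cont.sub
      (continuous_const.mul (Real.continuous_exp.comp (continuous_const.mul continuous_id)))
  have hzbound : ∀ s ≤ T0, |z s| ≤ ε + c := by
    intro s hs
    rw [hzdef]
    simp only
    have h1 := hsmall s hs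
    have h2 : 0 ≤ c * Real.exp (2*m*s) := mul_nonneg hc.le (Real.exp_pos _).le
    have h3 : c * Real.exp (2*m*s) ≤ c := by
      have hms : (0:ℝ) ≤ m * (-s) := mul_nonneg hm.le (by linarith only [hs, hT0le0])
      have hexps : Real.exp (2*m*s) ≤ 1 := Real.exp_le_one_iff.mpr (by linarith only [hms])
      calc c * Real.exp (2*m*s) ≤ c * 1 := mul_le_mul_of_nonneg_left hexps hc.le
        _ = c := mul_one c
    have : ys s - 1 - c*Real.exp (2*m*s) = (ys s - 1) - c*Real.exp (2*m*s) := by ring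
    rw [this, sub_eq_add_neg]
    refine (abs_add_le _ _).trans ?_
    rw [abs_neg, abs_of_nonneg h2]
    linarith only [h1, h3]
  obtain ⟨vz, hvzdef⟩ : ∃ vz : ℝ → ℂ, vz = fun t => ((zd t : ℝ) : ℂ) - l2 * ((z t : ℝ) : ℂ) := ⟨_, rfl⟩
  have hvzcont : Continuous vz := by
    rw [hvzdef]
    exact (Complex.continuous_ofReal.comp hzdcont).sub
      (continuous_const.mul (Complex.continuous_ofReal.comp hzcont))
  have hcidC : (c:ℂ) * (((2*m:ℝ):ℂ)^2 + (a:ℂ)*((2*m:ℝ):ℂ) + (q:ℂ)) = ((m:ℝ):ℂ)^2 := by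
    have := hcid
    rw [hDqdef] at this
    exact_mod_cast congrArg (fun r : ℝ => (r : ℂ)) this
  have hvzd : ∀ t : ℝ, HasDerivAt vz (l1 * vz t + ((g1 t - m^2*Real.exp (2*m*t) : ℝ) : ℂ)) t := by
    intro t
    have h1 : HasDerivAt (fun s : ℝ => ((zd s : ℝ) : ℂ)) ((ys'' t - 4*m^2*c*Real.exp (2*m*t) : ℝ) : ℂ) t :=
      (hzdd t).ofReal_comp
    have h2 : HasDerivAt (fun s : ℝ => ((z s : ℝ) : ℂ)) ((zd t : ℝ) : ℂ) t :=
      (hzd t).ofReal_comp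
    have h3 := h1.sub (h2.const_mul l2)
    rw [hvzdef]
    refine h3.congr_deriv ?_
    beta_reduce
    have hc : ((ys'' t : ℝ) : ℂ) = -(a:ℂ)*((ys' t : ℝ):ℂ) - (q:ℂ)*(((ys t - 1:ℝ)):ℂ) + ((g1 t:ℝ):ℂ) := by
      exact_mod_cast congrArg (fun r : ℝ => (r : ℂ)) (hODEid t)
    have hzC : ((z t : ℝ) : ℂ) = ((ys t - 1 : ℝ) : ℂ) - (c:ℂ)*((Real.exp (2*m*t) : ℝ) : ℂ) := by
      rw [hzdef]
      push_cast
      ring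
    have hzdC : ((zd t : ℝ) : ℂ) = ((ys' t : ℝ) : ℂ) - 2*(m:ℂ)*(c:ℂ)*((Real.exp (2*m*t) : ℝ) : ℂ) := by
      rw [hzddef]
      push_cast
      ring
    rw [hzC, hzdC]
    push_cast at hc hcidC ⊢
    linear_combination hc - ((ys' t : ℝ):ℂ)*hsum + (((ys t : ℝ):ℂ) - 1)*hprod
      - Complex.exp (2*(m:ℂ)*(t:ℂ))*(-2*(m:ℂ)*(c:ℂ)*hsum + (c:ℂ)*hprod + hcidC)
  have hMvz : ∀ s ≤ T0, ∃ s' ≤ s, ‖vz s'‖ ≤ (2 + ‖l2‖) * (ε + c) := by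
    intro s hs
    obtain ⟨ξ, hξ, hslope⟩ := exists_hasDerivAt_eq_slope z zd (by linarith : s - 1 < s)
      hzcont.continuousOn (fun x _ => hzd x)
    refine ⟨ξ, hξ.2.le, ?_⟩
    have hξT : ξ ≤ T0 := le_trans hξ.2.le hs
    have h1 : |zd ξ| ≤ 2*(ε + c) := by
      rw [hslope, show s - (s-1) = 1 by ring, div_one]
      have e1 := hzbound s hs
      have e2 := hzbound (s-1) (by linarith)
      have htri : |z s - z (s-1)| ≤ |z s| + |z (s-1)| := by
        rw [sub_eq_add_neg]
        refine (abs_add_le _ _).trans ?_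
        rw [abs_neg]
      linarith only [htri, e1, e2]
    have h2 : |z ξ| ≤ ε + c := hzbound ξ hξT
    rw [hvzdef]
    simp only
    calc ‖((zd ξ:ℝ):ℂ) - l2*((z ξ:ℝ):ℂ)‖
        ≤ ‖((zd ξ:ℝ):ℂ)‖ + ‖l2*((z ξ:ℝ):ℂ)‖ := norm_sub_le _ _
      _ ≤ 2*(ε+c) + ‖l2‖*(ε+c) := by
          rw [norm_mul, Complex.norm_real, Complex.norm_real, Real.norm_eq_abs, Real.norm_eq_abs]
          have := mul_le_mul_of_nonneg_left h2 (norm_nonneg l2)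
          linarith only [this, h1]
      _ = (2 + ‖l2‖)*(ε+c) := by ring
  have hhb : ∀ τ ≤ T0, ‖((g1 τ - m^2*Real.exp (2*m*τ) : ℝ):ℂ)‖ ≤ Kh * Real.exp (4*m*τ) + 0 := by
    intro τ hτ
    have hw := hsmall τ hτ
    have hwd := hwdecay τ hτ
    rw [Complex.norm_real, Real.norm_eq_abs, add_zero]
    have hkey : g1 τ - m^2*Real.exp (2*m*τ)
        = m^2*Real.exp (2*m*τ)*(ys τ - 1) - (ys τ ^ p - 1 - p*(ys τ - 1)) := by
      rw [hg1eq τ]; ring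
    rw [hkey]
    have hR := hCR (ys τ) (by linarith only [hw, hεhalf])
    have htri : |m^2*Real.exp (2*m*τ)*(ys τ - 1) - (ys τ ^ p - 1 - p*(ys τ - 1))|
        ≤ |m^2*Real.exp (2*m*τ)*(ys τ - 1)| + |ys τ ^ p - 1 - p*(ys τ - 1)| := by
      rw [sub_eq_add_neg]
      refine (abs_add_le _ _).trans ?_
      rw [abs_neg]
    have hexp2 : Real.exp (2*m*τ) * Real.exp (2*m*τ) = Real.exp (4*m*τ) := by
      rw [← Real.exp_add]; ring_nf
    have e1 : |m^2*Real.exp (2*m*τ)*(ys τ - 1)| ≤ m^2*(2*C2) * Real.exp (4*m*τ) := by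
      rw [abs_mul, abs_of_nonneg (by positivity : (0:ℝ) ≤ m^2*Real.exp (2*m*τ))]
      calc m^2*Real.exp (2*m*τ) * |ys τ - 1| ≤ m^2*Real.exp (2*m*τ) * (2*C2 * Real.exp (2*m*τ)) := by
            apply mul_le_mul_of_nonneg_left hwd (by positivity)
        _ = m^2*(2*C2) * Real.exp (4*m*τ) := by rw [← hexp2]; ring
    have e2 : |ys τ ^ p - 1 - p*(ys τ - 1)| ≤ CR*(2*C2)^2 * Real.exp (4*m*τ) := by
      refine hR.trans ?_
      have hsq : (ys τ - 1)^2 ≤ (2*C2 * Real.exp (2*m*τ))^2 := by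
        rw [← sq_abs (ys τ - 1)]
        apply pow_le_pow_left₀ (abs_nonneg _) hwd
      calc CR * (ys τ - 1)^2 ≤ CR * (2*C2 * Real.exp (2*m*τ))^2 :=
            mul_le_mul_of_nonneg_left hsq hCRnn
        _ = CR*(2*C2)^2 * Real.exp (4*m*τ) := by rw [← hexp2]; ring
    rw [hKhdef]
    calc |m^2*Real.exp (2*m*τ)*(ys τ - 1) - (ys τ ^ p - 1 - p*(ys τ - 1))|
        ≤ |m^2*Real.exp (2*m*τ)*(ys τ - 1)| + |ys τ ^ p - 1 - p*(ys τ - 1)| := htri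
      _ ≤ m^2*(2*C2) * Real.exp (4*m*τ) + CR*(2*C2)^2 * Real.exp (4*m*τ) := by
          linarith only [e1, e2]
      _ = (m^2*(2*C2) + CR*(2*C2)^2) * Real.exp (4*m*τ) := by ring
  have app3 := core_bound l1 hl1re vz (fun τ => ((g1 τ - m^2*Real.exp (2*m*τ) : ℝ):ℂ)) T0
    (fun τ _ => hvzd τ)
    ((Complex.continuous_ofReal.comp (hg1cont.sub (continuous_const.mul
      (Real.continuous_exp.comp (continuous_const.mul continuous_id))))).continuousOn)
    Kh 0 ((2 + ‖l2‖) * (ε + c)) (4*m)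
    (by linarith only [hm]) hKhnn le_rfl
    (mul_nonneg (by positivity) (by linarith only [hεpos, hc]))
    hhb hMvz
  have hfd4 : ∀ τ ≤ T0, HasDerivAt (fun s : ℝ => ((z s:ℝ):ℂ))
      (l2 * ((z τ:ℝ):ℂ) + vz τ) τ := by
    intro τ _
    have h2 : HasDerivAt (fun s : ℝ => ((z s : ℝ) : ℂ)) ((zd τ : ℝ) : ℂ) τ :=
      (hzd τ).ofReal_comp
    convert h2 using 1
    rw [hvzdef]
    ring
  have app4 := core_bound l2 hl2re (fun s : ℝ => ((z s:ℝ):ℂ)) vz T0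
    hfd4 hvzcont.continuousOn
    (Kh / (4*m - l1.re)) 0 (ε + c) (4*m)
    (by linarith only [hm])
    (div_nonneg hKhnn h4ml1.le) le_rfl
    (by linarith only [hεpos, hc])
    (fun τ hτ => by simpa using app3 τ hτ)
    (fun s hs => ⟨s, le_rfl, by rw [Complex.norm_real, Real.norm_eq_abs]; exact hzbound s hs⟩)
  -- final constant
  obtain ⟨K5, hK5def⟩ : ∃ x : ℝ, x = Kh/(4*m - l1.re)
      + ‖l2‖*(Kh/(4*m - l1.re)/(4*m - l2.re)) := ⟨_, rfl⟩
  have hK5nn : 0 ≤ K5 := by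
    rw [hK5def]
    have h1 : 0 ≤ Kh/(4*m - l1.re) := div_nonneg hKhnn h4ml1.le
    have h2 : 0 ≤ Kh/(4*m - l1.re)/(4*m - l2.re) := div_nonneg h1 h4ml2.le
    have h3 := mul_nonneg (norm_nonneg l2) h2
    linarith only [h1, h3]
  have hzdfinal : ∀ t ≤ T0, |zd t| ≤ K5 * Real.exp (4*m*t) := by
    intro t ht
    have h6 := app3 t ht
    have h7 := app4 t ht
    simp only [zero_div, add_zero] at h6 h7
    have hsplit : ((zd t:ℝ):ℂ) = vz t + l2 * ((z t:ℝ):ℂ) := by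
      rw [hvzdef]; ring
    have : |zd t| = ‖((zd t:ℝ):ℂ)‖ := by rw [Complex.norm_real, Real.norm_eq_abs]
    rw [this, hsplit]
    calc ‖vz t + l2 * ((z t:ℝ):ℂ)‖ ≤ ‖vz t‖ + ‖l2‖ * ‖((z t:ℝ):ℂ)‖ := by
          refine (norm_add_le _ _).trans ?_
          rw [norm_mul]
      _ ≤ Kh/(4*m - l1.re) * Real.exp (4*m*t)
            + ‖l2‖ * (Kh/(4*m - l1.re)/(4*m - l2.re) * Real.exp (4*m*t)) :=
          add_le_add h6 (mul_le_mul_of_nonneg_left h7 (norm_nonneg l2))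
      _ = K5 * Real.exp (4*m*t) := by rw [hK5def]; ring
  -- conclusion
  refine ⟨K5 + 1, by linarith only [hK5nn], T0, ?_⟩
  intro t ht
  rw [← hmdef, ← hθdef]
  have hcoeff2 : m / (2*((N:ℝ)-1) - 3*θ) = 2*m*c := by
    rw [← hEdef]
    exact hcoeff.symm
  rw [hcoeff2]
  have hmain : ys' t - 2*m*c * Real.exp (2*m*t) = zd t := by
    rw [hzddef]
  rw [hmain]
  have hν1 : min (p-1) 1 ≤ 1 := min_le_right _ _
  have hν0 : 0 ≤ min (p-1) 1 := le_min (by linarith only [hp]) (by norm_num)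
  have hexpcmp : Real.exp (4*m*t) ≤ Real.exp (2*m*(1 + min (p-1) 1)*t) := by
    apply Real.exp_le_exp.2
    have hkey : 0 ≤ 2*m*(1 - min (p-1) 1)*(-t) := by
      apply mul_nonneg
      · apply mul_nonneg (by linarith only [hm]) (by linarith only [hν1])
      · linarith only [ht, hT0le0]
    nlinarith only [hkey]
  calc |zd t| ≤ K5 * Real.exp (4*m*t) := hzdfinal t ht
    _ ≤ K5 * Real.exp (2*m*(1 + min (p-1) 1)*t) :=
        mul_le_mul_of_nonneg_left hexpcmp hK5nn
    _ ≤ (K5 + 1) * Real.exp (2*m*(1 + min (p-1) 1)*t) := by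
        nlinarith only [Real.exp_pos (2*m*(1 + min (p-1) 1)*t)]
end
end

section
/- Suppose p > p_S. Then (u*)'(s) = −θ A s^{−θ−1}(1 + o(1)) as s ↓ 0 (that is, s^{θ+1}(u*)'(s) → −θA as s → 0⁺), and for every δ > 0 the integral ∫₀^δ (u*(s)² + (u*)'(s)²) s^{N−1} ds is finite. -/
open Real Set Filter Topology MeasureTheory

noncomputable section

/-- A continuous function with a limit at `-∞` is bounded on `Iic T`. -/
lemma bdd_on_Iic_of_tendsto_atBot {y : ℝ → ℝ} {L : ℝ} (T : ℝ) (hc : Continuous y)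
    (ht : Tendsto y atBot (𝓝 L)) : ∃ C, 0 ≤ C ∧ ∀ t ≤ T, |y t| ≤ C := by
  have h1 : ∀ᶠ t in atBot, dist (y t) L < 1 := Metric.tendsto_nhds.mp ht 1 one_pos
  obtain ⟨T', hT'⟩ := eventually_atBot.mp h1
  obtain ⟨C0, hC0⟩ := (isCompact_Icc (a := min T' T) (b := T)).exists_bound_of_continuousOn
    hc.continuousOn
  refine ⟨max C0 (|L| + 1), le_max_of_le_right (by positivity), fun t htT => ?_⟩
  rcases le_or_gt t T' with h | h
  · have := hT' t h
    rw [Real.dist_eq] at this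
    have : |y t| ≤ |L| + 1 := by
      have := abs_sub_abs_le_abs_sub (y t) L
      linarith
    exact le_max_of_le_right this
  · have : t ∈ Icc (min T' T) T := ⟨le_trans (min_le_left _ _) h.le, htT⟩
    have := hC0 t this
    rw [Real.norm_eq_abs] at this
    exact le_max_of_le_left this

/-- If `y'' + α y' = g` with `α > 0`, `g` continuous tending to `0` at `-∞`, and `y → 1`
at `-∞`, then `y' → 0` at `-∞`. -/
lemma yprime_tendsto_zero {α : ℝ} (hα : 0 < α) {y y' y'' g : ℝ → ℝ}
    (hy : ∀ t, HasDerivAt y (y' t) t) (hy' : ∀ t, HasDerivAt y' (y'' t) t)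
    (hode : ∀ t, y'' t + α * y' t = g t) (hgc : Continuous g)
    (hg0 : Tendsto g atBot (𝓝 0)) (hy1 : Tendsto y atBot (𝓝 1)) :
    Tendsto y' atBot (𝓝 0) := by
  have hy'c : Continuous y' := continuous_iff_continuousAt.mpr fun t => (hy' t).continuousAt
  set h : ℝ → ℝ := fun t => Real.exp (α * t) * y' t with hh_def
  have hexp : ∀ t : ℝ, HasDerivAt (fun t => Real.exp (α * t)) (α * Real.exp (α * t)) t := by
    intro t
    have h1 : HasDerivAt (fun t : ℝ => α * t) α t := by
      simpa using (hasDerivAt_id t).const_mul α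
    exact ((Real.hasDerivAt_exp (α * t)).comp t h1).congr_deriv (mul_comm _ _)
  have hh : ∀ t, HasDerivAt h (Real.exp (α * t) * g t) t := by
    intro t
    have := (hexp t).mul (hy' t)
    exact this.congr_deriv (by rw [← hode t]; ring)
  have hic : Continuous fun τ => Real.exp (α * τ) * g τ :=
    (Real.continuous_exp.comp (continuous_const.mul continuous_id)).mul hgc
  have key : ∀ s t : ℝ, s ≤ t → h t - h s = ∫ τ in s..t, Real.exp (α * τ) * g τ :=
    fun s t _ =>
      (intervalIntegral.integral_eq_sub_of_hasDerivAt (fun τ _ => hh τ)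
        (hic.intervalIntegrable s t)).symm
  -- a sequence of points going to -∞ where y' is small (mean value theorem)
  have hmvt : ∀ n : ℕ, ∃ c ∈ Ioo (-(n : ℝ) - 1) (-(n : ℝ)),
      y' c = (y (-(n : ℝ)) - y (-(n : ℝ) - 1)) / (-(n : ℝ) - (-(n : ℝ) - 1)) := by
    intro n
    exact exists_hasDerivAt_eq_slope y y' (by linarith)
      (continuous_iff_continuousAt.mpr fun t => (hy t).continuousAt).continuousOn
      (fun x _ => hy x)
  choose σ hσmem hσval using hmvt
  have hσle : ∀ n : ℕ, σ n ≤ -(n : ℝ) := fun n => (hσmem n).2.le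
  have hσbot : Tendsto σ atTop atBot := by
    apply tendsto_atBot_mono hσle
    exact tendsto_neg_atBot_iff.mpr tendsto_natCast_atTop_atTop
  have hyn : Tendsto (fun n : ℕ => y (-(n : ℝ))) atTop (𝓝 1) :=
    hy1.comp (tendsto_neg_atBot_iff.mpr tendsto_natCast_atTop_atTop)
  have hyn1 : Tendsto (fun n : ℕ => y (-(n : ℝ) - 1)) atTop (𝓝 1) := by
    apply hy1.comp
    apply tendsto_atBot_mono (fun n : ℕ => by linarith [hσle n, (hσmem n).1] : ∀ n : ℕ, -(n:ℝ) - 1 ≤ -(n:ℝ))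
    exact tendsto_neg_atBot_iff.mpr tendsto_natCast_atTop_atTop
  have hy'σ : Tendsto (fun n => y' (σ n)) atTop (𝓝 0) := by
    have : Tendsto (fun n : ℕ => (y (-(n : ℝ)) - y (-(n : ℝ) - 1)) / (-(n:ℝ) - (-(n:ℝ) - 1)))
        atTop (𝓝 0) := by
      have := (hyn.sub hyn1)
      simp only [sub_self] at this
      simpa using this.div_const 1
    exact this.congr fun n => (hσval n).symm
  have hexpσ : Tendsto (fun n => Real.exp (α * σ n)) atTop (𝓝 0) :=
    Real.tendsto_exp_atBot.comp (hσbot.const_mul_atBot hα)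
  have hhσ : Tendsto (fun n => h (σ n)) atTop (𝓝 0) := by
    have := hexpσ.mul hy'σ
    simpa using this
  rw [Metric.tendsto_nhds]
  intro ε hε
  set ε' := ε * α / 2 with hε'def
  have hε' : 0 < ε' := by positivity
  have h2 : ∀ᶠ τ in atBot, |g τ| ≤ ε' := by
    have := Metric.tendsto_nhds.mp hg0 ε' hε'
    filter_upwards [this] with τ hτ
    rw [Real.dist_eq, sub_zero] at hτ; exact hτ.le
  obtain ⟨T1, hT1⟩ := eventually_atBot.mp h2
  filter_upwards [eventually_le_atBot T1] with t ht
  -- main estimate : |h t| ≤ ε' * exp (α t) / α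
  have hmain : |h t| ≤ ε' * Real.exp (α * t) / α := by
    have hlim : Tendsto (fun n => |h (σ n)| + ε' * Real.exp (α * t) / α) atTop
        (𝓝 (ε' * Real.exp (α * t) / α)) := by
      simpa using hhσ.abs.add (tendsto_const_nhds (x := ε' * Real.exp (α * t) / α))
    apply ge_of_tendsto hlim
    filter_upwards [hσbot.eventually (eventually_le_atBot t)] with n hn
    have hkey := key (σ n) t hn
    have hint : |∫ τ in σ n..t, Real.exp (α * τ) * g τ| ≤ ε' * Real.exp (α * t) / α := by
      have hb1 : |∫ τ in σ n..t, Real.exp (α * τ) * g τ|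
          ≤ ∫ τ in σ n..t, |Real.exp (α * τ) * g τ| :=
        intervalIntegral.abs_integral_le_integral_abs hn
      have hb2 : ∫ τ in σ n..t, |Real.exp (α * τ) * g τ|
          ≤ ∫ τ in σ n..t, ε' * Real.exp (α * τ) := by
        apply intervalIntegral.integral_mono_on hn
          (hic.abs.intervalIntegrable _ _)
          ((continuous_const.mul (Real.continuous_exp.comp
            (continuous_const.mul continuous_id))).intervalIntegrable _ _)
        intro τ hτ
        rw [abs_mul, Real.abs_exp]
        have : |g τ| ≤ ε' := hT1 τ (le_trans hτ.2 ht)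
        calc Real.exp (α * τ) * |g τ| ≤ Real.exp (α * τ) * ε' := by
              exact mul_le_mul_of_nonneg_left this (Real.exp_pos _).le
          _ = ε' * Real.exp (α * τ) := mul_comm _ _
      have hb3 : ∫ τ in σ n..t, ε' * Real.exp (α * τ)
          = ε' * ((Real.exp (α * t) - Real.exp (α * (σ n))) / α) := by
        rw [intervalIntegral.integral_const_mul]
        congr 1
        have hanti : ∀ τ : ℝ, HasDerivAt (fun τ => Real.exp (α * τ) / α)
            (Real.exp (α * τ)) τ := by
          intro τ
          have h1 : HasDerivAt (fun τ : ℝ => α * τ) α τ := by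
            simpa using (hasDerivAt_id τ).const_mul α
          have := ((Real.hasDerivAt_exp (α * τ)).comp τ h1).div_const α
          exact this.congr_deriv (mul_div_cancel_right₀ _ hα.ne')
        rw [intervalIntegral.integral_eq_sub_of_hasDerivAt (fun τ _ => hanti τ)
          ((Real.continuous_exp.comp (continuous_const.mul continuous_id)).intervalIntegrable _ _)]
        ring
      calc |∫ τ in σ n..t, Real.exp (α * τ) * g τ| ≤ _ := hb1
        _ ≤ _ := hb2
        _ = ε' * ((Real.exp (α * t) - Real.exp (α * (σ n))) / α) := hb3
        _ ≤ ε' * Real.exp (α * t) / α := by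
            rw [mul_div_assoc]
            apply mul_le_mul_of_nonneg_left _ hε'.le
            apply div_le_div_of_nonneg_right _ hα.le
            linarith [Real.exp_pos (α * σ n)]
    calc |h t| = |h (σ n) + (h t - h (σ n))| := by ring_nf
      _ ≤ |h (σ n)| + |h t - h (σ n)| := abs_add_le _ _
      _ ≤ |h (σ n)| + ε' * Real.exp (α * t) / α := by
          rw [hkey]; linarith [hint]
  -- conclude
  rw [Real.dist_eq, sub_zero]
  have hexp_pos := Real.exp_pos (α * t)
  have habs : Real.exp (α * t) * |y' t| ≤ ε' * Real.exp (α * t) / α := by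
    calc Real.exp (α * t) * |y' t| = |h t| := by
          rw [hh_def]; simp [abs_mul, Real.abs_exp]
      _ ≤ _ := hmain
  have : |y' t| ≤ ε / 2 := by
    rw [hε'def] at habs
    have h3 : Real.exp (α * t) * |y' t| ≤ Real.exp (α * t) * (ε / 2) := by
      calc Real.exp (α * t) * |y' t| ≤ ε * α / 2 * Real.exp (α * t) / α := habs
        _ = Real.exp (α * t) * (ε / 2) := by field_simp
    exact le_of_mul_le_mul_left h3 hexp_pos
  linarith [abs_nonneg (y' t)]

/-- `(u*)'(s) = -θ A s^{-θ-1}(1+o(1))` as `s ↓ 0`, and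
`∫₀^δ (u*(s)² + (u*)'(s)²) s^{N-1} ds < ∞` for every `δ > 0`. -/
theorem ustar_deriv_asymptotics_and_H1 (N : ℕ) (hN : 3 ≤ N) (p : ℝ) (hp : 1 < p)
    (hpS : pSob N < p)
    (ys ys' ys'' : ℝ → ℝ) (hys : IsEntireSingODE N p ys ys' ys'') :
    Tendsto (fun s => s ^ (thetaP p + 1) * deriv (ustar N p ys) s) (𝓝[>] (0:ℝ))
      (𝓝 (-(thetaP p) * Aconst N p)) ∧
    ∀ δ > (0:ℝ),
      IntegrableOn
        (fun s => (ustar N p ys s ^ 2 + (deriv (ustar N p ys) s) ^ 2) * s ^ (N - 1))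
        (Ioo 0 δ) := by
  obtain ⟨hy, hy', hy'', hode, hy1⟩ := hys
  set θ := thetaP p with hθdef
  set A := Aconst N p with hAdef
  set m := mConst N p with hmdef
  set α := alphaConst N p with hαdef
  -- basic positivity facts
  have hN2 : (2:ℝ) < (N:ℝ) := by exact_mod_cast (by omega : 2 < N)
  have hp1 : (0:ℝ) < p - 1 := by linarith
  have hθpos : 0 < θ := by rw [hθdef, thetaP]; positivity
  have hNp : (N:ℝ) + 2 < p * ((N:ℝ) - 2) := by
    rw [pSob, div_lt_iff₀ (by linarith)] at hpS; linarith
  have hθlt : 2 * θ < (N:ℝ) - 2 := by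
    rw [hθdef, thetaP]
    have h4 : 2 * (2 / (p - 1)) = 4 / (p - 1) := by ring
    rw [h4, div_lt_iff₀ hp1]
    nlinarith
  have hc : 0 < θ * ((N:ℝ) - 2 - θ) := mul_pos hθpos (by linarith)
  have hm : 0 < m := by rw [hmdef, mConst, ← hθdef]; positivity
  have hA : 0 < A := by rw [hAdef, Aconst, ← hθdef]; positivity
  have hα : 0 < α := by
    rw [hαdef, alphaConst, ← hmdef, ← hθdef]
    exact mul_pos hm (by linarith)
  have hyc : Continuous ys := continuous_iff_continuousAt.mpr fun t => (hy t).continuousAt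
  have hy'c : Continuous ys' := continuous_iff_continuousAt.mpr fun t => (hy' t).continuousAt
  -- y' tends to 0 at -∞
  set g : ℝ → ℝ := fun t => ys t - ys t ^ p + m ^ 2 * Real.exp (2 * m * t) * ys t with hgdef
  have hode' : ∀ t, ys'' t + α * ys' t = g t := by
    intro t
    have h := hode t
    simp only [hgdef]
    linarith
  have hgc : Continuous g := by
    rw [hgdef]
    exact (hyc.sub (hyc.rpow_const fun x => Or.inr (by linarith))).add
      ((continuous_const.mul (Real.continuous_exp.comp (continuous_const.mul continuous_id))).mul hyc)
  have hg0 : Tendsto g atBot (𝓝 0) := by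
    have hexp0 : Tendsto (fun t => Real.exp (2 * m * t)) atBot (𝓝 0) :=
      Real.tendsto_exp_atBot.comp (tendsto_id.const_mul_atBot (by positivity))
    have h1 : Tendsto (fun t => ys t ^ p) atBot (𝓝 (1 ^ p)) :=
      hy1.rpow_const (Or.inr (by linarith))
    have := (hy1.sub h1).add ((tendsto_const_nhds (x := m ^ 2)).mul (hexp0.mul hy1))
    rw [hgdef]
    simpa [mul_assoc] using this
  have hy'0 : Tendsto ys' atBot (𝓝 0) := yprime_tendsto_zero hα hy hy' hode' hgc hg0 hy1
  -- the derivative of ustar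
  set Fd : ℝ → ℝ := fun s =>
    A * s ^ (-θ - 1) * (-θ * ys (Real.log s / m) + ys' (Real.log s / m) / m) with hFddef
  have hder : ∀ s : ℝ, 0 < s → HasDerivAt (ustar N p ys) (Fd s) s := by
    intro s hs
    have h1 : HasDerivAt (fun s : ℝ => s ^ (-θ)) (-θ * s ^ (-θ - 1)) s :=
      Real.hasDerivAt_rpow_const (Or.inl hs.ne')
    have h2 : HasDerivAt (fun s : ℝ => Real.log s / m) (s⁻¹ / m) s :=
      (Real.hasDerivAt_log hs.ne').div_const m
    have h3 : HasDerivAt (fun s : ℝ => ys (Real.log s / m))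
        (ys' (Real.log s / m) * (s⁻¹ / m)) s := (hy _).comp s h2
    have h4 := (h1.const_mul A).mul h3
    have hfun : (ustar N p ys) = fun s : ℝ => A * s ^ (-θ) * ys (Real.log s / m) := by
      funext x; rw [ustar, ← hθdef, ← hmdef, ← hAdef]
    rw [hfun]
    have hpow : s ^ (-θ - 1) = s ^ (-θ) * s⁻¹ := by
      rw [Real.rpow_sub hs, Real.rpow_one, div_eq_mul_inv]
    have hFd : Fd s = A * (-θ * s ^ (-θ - 1)) * ys (Real.log s / m)
        + A * s ^ (-θ) * (ys' (Real.log s / m) * (s⁻¹ / m)) := by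
      simp only [hFddef]
      rw [hpow]
      ring
    rw [hFd]
    exact h4
  constructor
  · -- Part 1: the limit
    have hτbot : Tendsto (fun s : ℝ => Real.log s / m) (𝓝[>] (0:ℝ)) atBot :=
      Real.tendsto_log_nhdsGT_zero.atBot_div_const hm
    have hG : Tendsto (fun s : ℝ =>
        A * (-θ * ys (Real.log s / m) + ys' (Real.log s / m) / m)) (𝓝[>] (0:ℝ))
        (𝓝 (-θ * A)) := by
      have := (((hy1.comp hτbot).const_mul (-θ)).add ((hy'0.comp hτbot).div_const m)).const_mul A
      have heq : A * (-θ * 1 + 0 / m) = -θ * A := by ring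
      rw [heq] at this
      exact this.congr fun s => rfl
    refine hG.congr' ?_
    filter_upwards [self_mem_nhdsWithin] with s hs
    rw [(hder s hs).deriv]
    have h1 : s ^ (θ + 1) * s ^ (-θ - 1) = 1 := by
      rw [← Real.rpow_add hs]; norm_num
    rw [hFddef]
    calc A * (-θ * ys (Real.log s / m) + ys' (Real.log s / m) / m)
        = (s ^ (θ + 1) * s ^ (-θ - 1)) *
          (A * (-θ * ys (Real.log s / m) + ys' (Real.log s / m) / m)) := by rw [h1, one_mul]
      _ = s ^ (θ + 1) * (A * s ^ (-θ - 1) *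
          (-θ * ys (Real.log s / m) + ys' (Real.log s / m) / m)) := by ring
  · -- Part 2: integrability
    intro δ hδ
    obtain ⟨C1, hC1n, hC1⟩ := bdd_on_Iic_of_tendsto_atBot (Real.log δ / m) hyc hy1
    obtain ⟨C2, hC2n, hC2⟩ := bdd_on_Iic_of_tendsto_atBot (Real.log δ / m) hy'c hy'0
    set K : ℝ := A ^ 2 * C1 ^ 2 * δ ^ 2 + A ^ 2 * (θ * C1 + C2 / m) ^ 2 with hKdef
    have hKn : 0 ≤ K := by positivity
    set Φ : ℝ → ℝ := fun s =>
      ((A * s ^ (-θ) * ys (Real.log s / m)) ^ 2 + (Fd s) ^ 2) * s ^ (N - 1) with hΦdef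
    have hEq : EqOn (fun s => (ustar N p ys s ^ 2 + (deriv (ustar N p ys) s) ^ 2) * s ^ (N - 1))
        Φ (Ioo 0 δ) := by
      intro s hs
      have h1 := (hder s hs.1).deriv
      simp only [hΦdef, h1]
      rw [ustar, ← hθdef, ← hmdef, ← hAdef]
    have hexp : (-1:ℝ) < (N:ℝ) - 3 - 2 * θ := by linarith
    have hInt : IntegrableOn (fun s : ℝ => K * s ^ ((N:ℝ) - 3 - 2 * θ)) (Ioo 0 δ) := by
      have := intervalIntegral.intervalIntegrable_rpow' (a := 0) (b := δ) hexp
      rw [intervalIntegrable_iff_integrableOn_Ioc_of_le hδ.le] at this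
      exact (this.mono_set Ioo_subset_Ioc_self).const_mul K
    have hΦcont : ContinuousOn Φ (Ioo 0 δ) := by
      have hne : ∀ s ∈ Ioo (0:ℝ) δ, s ≠ 0 := fun s hs => hs.1.ne'
      have hlog : ContinuousOn (fun s : ℝ => Real.log s / m) (Ioo 0 δ) :=
        (Real.continuousOn_log.mono fun s hs => hne s hs).div_const m
      have hyτ : ContinuousOn (fun s : ℝ => ys (Real.log s / m)) (Ioo 0 δ) :=
        hyc.comp_continuousOn hlog
      have hy'τ : ContinuousOn (fun s : ℝ => ys' (Real.log s / m)) (Ioo 0 δ) :=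
        hy'c.comp_continuousOn hlog
      have hr1 : ContinuousOn (fun s : ℝ => s ^ (-θ)) (Ioo 0 δ) :=
        continuousOn_id.rpow_const fun s hs => Or.inl (hne s hs)
      have hr2 : ContinuousOn (fun s : ℝ => s ^ (-θ - 1)) (Ioo 0 δ) :=
        continuousOn_id.rpow_const fun s hs => Or.inl (hne s hs)
      have hFdc : ContinuousOn Fd (Ioo 0 δ) := by
        rw [hFddef]
        exact ((continuousOn_const.mul hr2).mul
          ((continuousOn_const.mul hyτ).add (hy'τ.div_const m)))
      rw [hΦdef]
      exact ((((continuousOn_const.mul hr1).mul hyτ).pow 2).add (hFdc.pow 2)).mul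
        (continuousOn_pow _)
    have hΦint : IntegrableOn Φ (Ioo 0 δ) := by
      refine Integrable.mono' hInt (hΦcont.aestronglyMeasurable measurableSet_Ioo) ?_
      rw [ae_restrict_iff' measurableSet_Ioo]
      refine ae_of_all _ fun s hs => ?_
      have hs0 : 0 < s := hs.1
      -- notation
      set Y := ys (Real.log s / m) with hYdef
      set Z := ys' (Real.log s / m) with hZdef
      set X := -θ * Y + Z / m with hXdef
      set P := s ^ ((N:ℝ) - 3 - 2 * θ) with hPdef
      have hP : 0 ≤ P := Real.rpow_nonneg hs0.le _
      have hτT : Real.log s / m ≤ Real.log δ / m := by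
        have hlogs : Real.log s ≤ Real.log δ := Real.log_le_log hs0 hs.2.le
        exact (div_le_div_iff_of_pos_right hm).mpr hlogs
      have hb1 : |Y| ≤ C1 := hC1 _ hτT
      have hb2 : |Z| ≤ C2 := hC2 _ hτT
      have hXb : |X| ≤ θ * C1 + C2 / m := by
        calc |X| ≤ |(-θ) * Y| + |Z / m| := abs_add_le _ _
          _ = θ * |Y| + |Z| / m := by
              rw [abs_mul, abs_div, abs_neg, abs_of_pos hθpos, abs_of_pos hm]
          _ ≤ θ * C1 + C2 / m := by gcongr
      have hy2 : Y ^ 2 ≤ C1 ^ 2 := by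
        rw [← sq_abs Y]; exact pow_le_pow_left₀ (abs_nonneg Y) hb1 2
      have hX2 : X ^ 2 ≤ (θ * C1 + C2 / m) ^ 2 := by
        rw [← sq_abs X]; exact pow_le_pow_left₀ (abs_nonneg X) hXb 2
      have hs2 : s ^ 2 ≤ δ ^ 2 := pow_le_pow_left₀ hs0.le hs.2.le 2
      have hmerge : ∀ a b : ℝ, s ^ a * s ^ b = s ^ (a + b) :=
        fun a b => (Real.rpow_add hs0 a b).symm
      have hsN : s ^ (N - 1) = s ^ ((N:ℝ) - 1) := by
        rw [← Real.rpow_natCast s (N - 1), Nat.cast_sub (by omega : 1 ≤ N), Nat.cast_one]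
      have e1 : (s ^ (-θ)) ^ 2 * s ^ ((N:ℝ) - 1) = s ^ 2 * P := by
        calc (s ^ (-θ)) ^ 2 * s ^ ((N:ℝ) - 1)
            = s ^ (-θ) * s ^ (-θ) * s ^ ((N:ℝ) - 1) := by rw [sq]
          _ = s ^ (-θ + -θ + ((N:ℝ) - 1)) := by rw [hmerge, hmerge]
          _ = s ^ ((2:ℝ) + ((N:ℝ) - 3 - 2 * θ)) := by congr 1; ring
          _ = s ^ (2:ℝ) * P := by rw [← hmerge, hPdef]
          _ = s ^ 2 * P := by
              rw [show (2:ℝ) = ((2:ℕ):ℝ) by norm_num, Real.rpow_natCast]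
      have e2 : (s ^ (-θ - 1)) ^ 2 * s ^ ((N:ℝ) - 1) = P := by
        calc (s ^ (-θ - 1)) ^ 2 * s ^ ((N:ℝ) - 1)
            = s ^ (-θ - 1) * s ^ (-θ - 1) * s ^ ((N:ℝ) - 1) := by rw [sq]
          _ = s ^ (-θ - 1 + (-θ - 1) + ((N:ℝ) - 1)) := by rw [hmerge, hmerge]
          _ = P := by rw [hPdef]; congr 1; ring
      have hΦeq : Φ s = A ^ 2 * Y ^ 2 * ((s ^ (-θ)) ^ 2 * s ^ ((N:ℝ) - 1))
          + A ^ 2 * X ^ 2 * ((s ^ (-θ - 1)) ^ 2 * s ^ ((N:ℝ) - 1)) := by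
        simp only [hΦdef, hFddef, hYdef, hZdef, hXdef]
        rw [hsN]
        ring
      have hΦnn : 0 ≤ Φ s := by
        rw [hΦeq]
        have := sq_nonneg (s ^ (-θ))
        have := sq_nonneg (s ^ (-θ - 1))
        have h3 : (0:ℝ) ≤ s ^ ((N:ℝ) - 1) := Real.rpow_nonneg hs0.le _
        positivity
      rw [Real.norm_eq_abs, abs_of_nonneg hΦnn]
      have t1 : A ^ 2 * Y ^ 2 * (s ^ 2 * P) ≤ A ^ 2 * C1 ^ 2 * (δ ^ 2 * P) := by
        have h1 : Y ^ 2 * s ^ 2 ≤ C1 ^ 2 * δ ^ 2 :=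
          mul_le_mul hy2 hs2 (sq_nonneg s) (by positivity)
        have h2 : Y ^ 2 * s ^ 2 * P ≤ C1 ^ 2 * δ ^ 2 * P :=
          mul_le_mul_of_nonneg_right h1 hP
        calc A ^ 2 * Y ^ 2 * (s ^ 2 * P) = A ^ 2 * (Y ^ 2 * s ^ 2 * P) := by ring
          _ ≤ A ^ 2 * (C1 ^ 2 * δ ^ 2 * P) := mul_le_mul_of_nonneg_left h2 (sq_nonneg A)
          _ = A ^ 2 * C1 ^ 2 * (δ ^ 2 * P) := by ring
      have t2 : A ^ 2 * X ^ 2 * P ≤ A ^ 2 * (θ * C1 + C2 / m) ^ 2 * P :=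
        mul_le_mul_of_nonneg_right (mul_le_mul_of_nonneg_left hX2 (sq_nonneg A)) hP
      calc Φ s = A ^ 2 * Y ^ 2 * (s ^ 2 * P) + A ^ 2 * X ^ 2 * P := by
            rw [hΦeq, e1, e2]
        _ ≤ A ^ 2 * C1 ^ 2 * (δ ^ 2 * P) + A ^ 2 * (θ * C1 + C2 / m) ^ 2 * P := by
            exact add_le_add t1 t2
        _ = K * s ^ ((N:ℝ) - 3 - 2 * θ) := by rw [hKdef, hPdef]; ring
    exact hΦint.congr_fun hEq.symm measurableSet_Ioo
end
end
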